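/- arXiv:1007.1617 — 11 statements merged into one kernel-verified Lean document; each statement's English description precedes it below -/
import Mathlib

section
/- Let A, B be real numbers, not both zero, and let (x, y) be a solution of the system x'(s) = x(s)y(s) + A, y'(s) = -x(s)^2 - B on all of ℝ. Define θ(s) = θ₀ + ∫₀^s x(s') ds' and define the plane curve X : ℝ → ℂ by X(s) = e^{iθ(s)} (x(s) + i y(s))/(A - iB). Then X'(s) = e^{iθ(s)} for all s; in particular X is parametrized by arc length (‖X'(s)‖ = 1 for all s) and its signed curvature θ'(s) equals x(s). -/
/-- If `(x, y)` solves `x' = xy + A`, `y' = -x² - B` on all of `ℝ`,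
`θ(s) = θ₀ + ∫₀^s x`, and `X(s) = e^{iθ(s)}(x(s) + i y(s))/(A - iB)`, then
`X'(s) = e^{iθ(s)}` for all `s`; in particular `X` is unit-speed and its signed
curvature `θ'(s)` equals `x(s)`. -/
theorem stmt_0 (A B : ℝ) (hAB : A ≠ 0 ∨ B ≠ 0)
    (x y : ℝ → ℝ)
    (hx : ∀ s, HasDerivAt x (x s * y s + A) s)
    (hy : ∀ s, HasDerivAt y (-(x s) ^ 2 - B) s)
    (θ₀ : ℝ) (θ : ℝ → ℝ)
    (hθ : ∀ s, θ s = θ₀ + ∫ t in (0:ℝ)..s, x t)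
    (X : ℝ → ℂ)
    (hX : ∀ s, X s = Complex.exp (Complex.I * (θ s : ℂ)) *
      ((x s : ℂ) + Complex.I * (y s : ℂ)) / ((A : ℂ) - Complex.I * (B : ℂ))) :
    (∀ s, HasDerivAt X (Complex.exp (Complex.I * (θ s : ℂ))) s) ∧
    (∀ s, ‖Complex.exp (Complex.I * (θ s : ℂ))‖ = 1) ∧
    (∀ s, HasDerivAt θ (x s) s) := by
  have hxc : Continuous x := by
    have : Differentiable ℝ x := fun t => (hx t).differentiableAt
    exact this.continuous
  have hθ' : ∀ s, HasDerivAt θ (x s) s := by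
    intro s
    have h1 : HasDerivAt (fun s => θ₀ + ∫ t in (0:ℝ)..s, x t) (x s) s := by
      have := (hxc.integral_hasStrictDerivAt 0 s).hasDerivAt
      exact ((hasDerivAt_const s θ₀).add this).congr_deriv (zero_add _)
    have : θ = fun s => θ₀ + ∫ t in (0:ℝ)..s, x t := funext hθ
    rw [this]; exact h1
  have hc : (A : ℂ) - Complex.I * (B : ℂ) ≠ 0 := by
    intro h
    rw [Complex.ext_iff] at h
    simp at h
    rcases hAB with hA | hB
    · exact hA h.1
    · exact hB h.2
  refine ⟨?_, ?_, hθ'⟩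
  · intro s
    have hXf : X = fun s => Complex.exp (Complex.I * (θ s : ℂ)) *
        ((x s : ℂ) + Complex.I * (y s : ℂ)) / ((A : ℂ) - Complex.I * (B : ℂ)) :=
      funext hX
    rw [hXf]
    have hθC : HasDerivAt (fun s => (θ s : ℂ)) ((x s : ℂ)) s :=
      (hθ' s).ofReal_comp
    have hexp : HasDerivAt (fun s => Complex.exp (Complex.I * (θ s : ℂ)))
        (Complex.exp (Complex.I * (θ s : ℂ)) * (Complex.I * (x s : ℂ))) s := by
      have := ((hθC.const_mul Complex.I).cexp)
      convert this using 1
    have hz : HasDerivAt (fun s => (x s : ℂ) + Complex.I * (y s : ℂ))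
        (((x s * y s + A : ℝ) : ℂ) + Complex.I * ((-(x s) ^ 2 - B : ℝ) : ℂ)) s :=
      ((hx s).ofReal_comp).add (((hy s).ofReal_comp).const_mul Complex.I)
    have := (hexp.mul hz).div_const ((A : ℂ) - Complex.I * (B : ℂ))
    refine this.congr_deriv ?_
    have key : Complex.exp (Complex.I * (θ s : ℂ)) * (Complex.I * (x s : ℂ)) *
        ((x s : ℂ) + Complex.I * (y s : ℂ)) +
        Complex.exp (Complex.I * (θ s : ℂ)) *
        (((x s * y s + A : ℝ) : ℂ) + Complex.I * ((-(x s) ^ 2 - B : ℝ) : ℂ)) =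
        Complex.exp (Complex.I * (θ s : ℂ)) * ((A : ℂ) - Complex.I * (B : ℂ)) := by
      push_cast
      have hI : Complex.I ^ 2 = -1 := Complex.I_sq
      ring_nf
      rw [hI]; ring
    rw [key]
    field_simp
  · intro s
    rw [Complex.norm_exp]
    norm_num [Complex.mul_re]
end

section
/- Let A, B be real numbers and let (x, y) be a solution of the system x'(s) = x(s)y(s) + A, y'(s) = -x(s)^2 - B on an interval containing 0. Then for all s in that interval, √(x(s)² + y(s)²) ≤ √(x(0)² + y(0)²) + √(A² + B²)·|s|. In particular, solutions cannot blow up in finite time. -/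
/-- If `(x, y)` solves `x' = xy + A`, `y' = -x² - B` on an interval `I`
containing `0`, then for all `s ∈ I`,
`√(x(s)² + y(s)²) ≤ √(x(0)² + y(0)²) + √(A² + B²)·|s|`. -/
theorem stmt_2 (A B : ℝ) (x y : ℝ → ℝ)
    (I : Set ℝ) (hI : I.OrdConnected) (h0 : (0:ℝ) ∈ I)
    (hx : ∀ s ∈ I, HasDerivWithinAt x (x s * y s + A) I s)
    (hy : ∀ s ∈ I, HasDerivWithinAt y (-(x s) ^ 2 - B) I s) :
    ∀ s ∈ I, Real.sqrt ((x s) ^ 2 + (y s) ^ 2) ≤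
      Real.sqrt ((x 0) ^ 2 + (y 0) ^ 2) + Real.sqrt (A ^ 2 + B ^ 2) * |s| := by
  intro s hs
  set C := Real.sqrt (A ^ 2 + B ^ 2) with hC
  have hIconv : Convex ℝ I := convex_iff_ordConnected.mpr hI
  have hCnn : 0 ≤ C := Real.sqrt_nonneg _
  -- main epsilon estimate
  have key : ∀ ε : ℝ, 0 < ε →
      Real.sqrt ((x s) ^ 2 + (y s) ^ 2 + ε) ≤
        Real.sqrt ((x 0) ^ 2 + (y 0) ^ 2 + ε) + C * |s| := by
    intro ε hε
    set F : ℝ → ℝ := fun t => Real.sqrt ((x t) ^ 2 + (y t) ^ 2 + ε) with hF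
    set F' : ℝ → ℝ := fun t =>
      (A * x t - B * y t) / Real.sqrt ((x t) ^ 2 + (y t) ^ 2 + ε) with hF'
    have hgpos : ∀ t : ℝ, 0 < (x t) ^ 2 + (y t) ^ 2 + ε := by
      intro t; positivity
    have hsqpos : ∀ t : ℝ, 0 < Real.sqrt ((x t) ^ 2 + (y t) ^ 2 + ε) := by
      intro t; exact Real.sqrt_pos.mpr (hgpos t)
    have hFderiv : ∀ t ∈ I, HasDerivWithinAt F (F' t) I t := by
      intro t ht
      have hg : HasDerivWithinAt (fun u => (x u) ^ 2 + (y u) ^ 2 + ε)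
          (2 * x t ^ 1 * (x t * y t + A) + 2 * y t ^ 1 * (-(x t) ^ 2 - B)) I t := by
        exact (((hx t ht).pow 2).add ((hy t ht).pow 2)).add_const ε
      have hsqrt := (Real.hasDerivAt_sqrt (ne_of_gt (hgpos t))).comp_hasDerivWithinAt t hg
      have hsqrt' : HasDerivWithinAt F _ I t := hsqrt
      convert hsqrt' using 1
      have hne : Real.sqrt ((x t) ^ 2 + (y t) ^ 2 + ε) ≠ 0 := ne_of_gt (hsqpos t)
      simp only [hF']
      field_simp
      ring
    have hbound : ∀ t ∈ I, ‖F' t‖ ≤ C := by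
      intro t ht
      have h1 : |A * x t - B * y t| ≤ C * Real.sqrt ((x t) ^ 2 + (y t) ^ 2 + ε) := by
        have h2 : (A * x t - B * y t) ^ 2 ≤ (A ^ 2 + B ^ 2) * ((x t) ^ 2 + (y t) ^ 2 + ε) := by
          nlinarith [sq_nonneg (A * y t + B * x t), sq_nonneg (x t), sq_nonneg (y t), hε.le]
        calc |A * x t - B * y t| = Real.sqrt ((A * x t - B * y t) ^ 2) := (Real.sqrt_sq_eq_abs _).symm
          _ ≤ Real.sqrt ((A ^ 2 + B ^ 2) * ((x t) ^ 2 + (y t) ^ 2 + ε)) := Real.sqrt_le_sqrt h2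
          _ = C * Real.sqrt ((x t) ^ 2 + (y t) ^ 2 + ε) := by
              rw [Real.sqrt_mul (by positivity)]
      rw [Real.norm_eq_abs, hF', abs_div, abs_of_pos (hsqpos t),
        div_le_iff₀ (hsqpos t)]
      exact h1
    have := hIconv.norm_image_sub_le_of_norm_hasDerivWithin_le hFderiv hbound h0 hs
    rw [Real.norm_eq_abs, Real.norm_eq_abs, sub_zero] at this
    have h3 : F s - F 0 ≤ C * |s| := (abs_le.mp this).2
    linarith
  -- pass to the limit ε → 0
  refine le_of_forall_pos_le_add ?_
  intro δ hδ
  have h := key (δ ^ 2) (by positivity)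
  have h1 : Real.sqrt ((x s) ^ 2 + (y s) ^ 2) ≤ Real.sqrt ((x s) ^ 2 + (y s) ^ 2 + δ ^ 2) :=
    Real.sqrt_le_sqrt (by nlinarith)
  have h2 : Real.sqrt ((x 0) ^ 2 + (y 0) ^ 2 + δ ^ 2) ≤
      Real.sqrt ((x 0) ^ 2 + (y 0) ^ 2) + δ := by
    have hnn := Real.sqrt_nonneg ((x 0) ^ 2 + (y 0) ^ 2)
    have hsq := Real.sq_sqrt (show (0:ℝ) ≤ (x 0) ^ 2 + (y 0) ^ 2 by positivity)
    calc Real.sqrt ((x 0) ^ 2 + (y 0) ^ 2 + δ ^ 2)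
        ≤ Real.sqrt ((Real.sqrt ((x 0) ^ 2 + (y 0) ^ 2) + δ) ^ 2) :=
          Real.sqrt_le_sqrt (by nlinarith)
      _ = Real.sqrt ((x 0) ^ 2 + (y 0) ^ 2) + δ :=
          Real.sqrt_sq (by positivity)
  linarith
end

section
/- Let A > 0 and B ≥ 0, and let (x, y) solve x'(s) = x(s)y(s) + A, y'(s) = -x(s)^2 - B on ℝ. Then x has at most one zero; moreover if x(s₀) = 0, then x(s) < 0 for all s < s₀ and x(s) > 0 for all s > s₀. -/
/-- If `A > 0`, `B ≥ 0` and `(x, y)` solves `x' = xy + A`, `y' = -x² - B`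
on `ℝ`, then `x` has at most one zero; moreover if `x(s₀) = 0` then `x < 0` before `s₀`
and `x > 0` after `s₀`. -/
theorem stmt_4 (A B : ℝ) (hA : 0 < A) (hB : 0 ≤ B) (x y : ℝ → ℝ)
    (hx : ∀ s, HasDerivAt x (x s * y s + A) s)
    (hy : ∀ s, HasDerivAt y (-(x s) ^ 2 - B) s) :
    (∀ s₁ s₂, x s₁ = 0 → x s₂ = 0 → s₁ = s₂) ∧
    (∀ s₀, x s₀ = 0 → (∀ s < s₀, x s < 0) ∧ (∀ s > s₀, x s > 0)) := by
  have hycont : Continuous y := continuous_iff_continuousAt.mpr fun s => (hy s).continuousAt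
  -- antiderivative of y
  set Y : ℝ → ℝ := fun s => ∫ t in (0:ℝ)..s, y t with hY
  have hYd : ∀ s, HasDerivAt Y (y s) s := by
    intro s
    exact intervalIntegral.integral_hasDerivAt_right
      (hycont.intervalIntegrable _ _)
      (hycont.stronglyMeasurableAtFilter _ _) hycont.continuousAt
  set u : ℝ → ℝ := fun s => x s * Real.exp (-Y s) with hu
  have hud : ∀ s, HasDerivAt u (A * Real.exp (-Y s)) s := by
    intro s
    have h1 : HasDerivAt (fun t => Real.exp (-Y t)) (Real.exp (-Y s) * -(y s)) s :=
      ((hYd s).neg).exp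
    have := (hx s).fun_mul h1
    exact this.congr_deriv (by ring)
  have hmono : StrictMono u := by
    apply strictMono_of_deriv_pos
    intro s
    rw [(hud s).deriv]
    positivity
  have hsign : ∀ s, (x s < 0 ↔ u s < 0) ∧ (x s = 0 ↔ u s = 0) ∧ (0 < x s ↔ 0 < u s) := by
    intro s
    have he : 0 < Real.exp (-Y s) := Real.exp_pos _
    have hu' : u s = x s * Real.exp (-Y s) := rfl
    constructor
    · constructor
      · intro h; rw [hu']; exact mul_neg_of_neg_of_pos h he
      · intro h; rw [hu'] at h; nlinarith
    constructor
    · constructor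
      · intro h; rw [hu', h, zero_mul]
      · intro h; rw [hu'] at h; rcases mul_eq_zero.mp h with h | h
        · exact h
        · exact absurd h he.ne'
    · constructor
      · intro h; rw [hu']; exact mul_pos h he
      · intro h; rw [hu'] at h; nlinarith
  constructor
  · intro s₁ s₂ h1 h2
    exact hmono.injective (((hsign s₁).2.1.mp h1).trans (((hsign s₂).2.1.mp h2)).symm)
  · intro s₀ h0
    have hu0 : u s₀ = 0 := (hsign s₀).2.1.mp h0
    constructor
    · intro s hs
      have : u s < 0 := hu0 ▸ hmono hs
      exact (hsign s).1.mpr this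
    · intro s hs
      have : 0 < u s := hu0 ▸ hmono hs
      exact (hsign s).2.2.mpr this
end

section
/- Let A > 0 and B ≥ 0, and let (x, y) solve x'(s) = x(s)y(s) + A, y'(s) = -x(s)^2 - B on ℝ. Then x is bounded: there exists M such that |x(s)| ≤ M for all s ∈ ℝ. -/
open Set Filter Topology

/-- If a function's derivative is everywhere bounded above by `K` on `[a,b]`,
then `f b ≤ f a + K * (b - a)`. -/
lemma decay_aux (f F : ℝ → ℝ) (hf : ∀ s, HasDerivAt f (F s) s) {a b : ℝ} (K : ℝ)
    (hab : a ≤ b) (hK : ∀ t ∈ Set.Icc a b, F t ≤ K) : f b ≤ f a + K * (b - a) := by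
  have hfc : Continuous f := Differentiable.continuous (fun t => (hf t).differentiableAt)
  have hg : ∀ s : ℝ, HasDerivAt (fun t => f t - K * t) (F s - K) s := by
    intro s
    have h := (hf s).sub ((hasDerivAt_id s).const_mul K)
    rw [mul_one] at h
    exact h
  have hmono : AntitoneOn (fun t => f t - K * t) (Set.Icc a b) := by
    apply antitoneOn_of_deriv_nonpos (convex_Icc a b)
    · exact (hfc.sub (continuous_const.mul continuous_id)).continuousOn
    · intro t _
      exact (hg t).differentiableAt.differentiableWithinAt
    · intro t ht
      rw [(hg t).deriv]
      have ht' : t ∈ Set.Icc a b := interior_subset ht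
      linarith [hK t ht']
  have h := hmono ⟨le_rfl, hab⟩ ⟨hab, le_rfl⟩ hab
  simp only [] at h
  linarith

lemma grow_aux (f F : ℝ → ℝ) (hf : ∀ s, HasDerivAt f (F s) s) {a b : ℝ} (K : ℝ)
    (hab : a ≤ b) (hK : ∀ t ∈ Set.Icc a b, K ≤ F t) : f a + K * (b - a) ≤ f b := by
  have h := decay_aux (fun t => -f t) (fun t => -F t) (fun s => (hf s).neg) (K := -K) hab
    (fun t ht => by simpa using neg_le_neg (hK t ht))
  simp only [neg_mul] at h
  linarith

/-- Lower barrier invariance: if `f a ≥ c` and `F > 0` whenever `f = c` (after `a`),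
then `f ≥ c` forever after `a`. -/
lemma inv_lower (f F : ℝ → ℝ) (hf : ∀ s, HasDerivAt f (F s) s) (a c : ℝ)
    (ha : c ≤ f a) (hF : ∀ s, a ≤ s → f s = c → 0 < F s) :
    ∀ s, a ≤ s → c ≤ f s := by
  have hfc : Continuous f := Differentiable.continuous (fun t => (hf t).differentiableAt)
  intro s hs
  by_contra hlt
  push_neg at hlt
  have hsa : a < s := by
    rcases lt_or_eq_of_le hs with h | h
    · exact h
    · exfalso; rw [h] at ha; linarith
  set K : Set ℝ := Set.Icc a s ∩ f ⁻¹' Set.Ici c with hKdef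
  have hKne : K.Nonempty := ⟨a, ⟨⟨le_rfl, hs⟩, ha⟩⟩
  have hKcl : IsClosed K := isClosed_Icc.inter (isClosed_Ici.preimage hfc)
  have hKbd : BddAbove K := (bddAbove_Icc (a := a) (b := s)).mono Set.inter_subset_left
  set T := sSup K with hTdef
  have hTK : T ∈ K := hKcl.csSup_mem hKne hKbd
  obtain ⟨⟨haT, hTs⟩, hfT⟩ := hTK
  have hfT' : c ≤ f T := hfT
  have hTs' : T < s := by
    rcases lt_or_eq_of_le hTs with h | h
    · exact h
    · exfalso; rw [h] at hfT'; linarith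
  have hev : ∀ᶠ t in 𝓝[>] T, c < f t := by
    rcases eq_or_lt_of_le hfT' with heq | hgt
    · -- f T = c, use derivative positivity
      have hFT : 0 < F T := hF T haT heq.symm
      have hslope : Filter.Tendsto (slope f T) (𝓝[≠] T) (𝓝 (F T)) :=
        hasDerivAt_iff_tendsto_slope.mp (hf T)
      have h1 : ∀ᶠ t in 𝓝[≠] T, 0 < slope f T t := hslope.eventually (eventually_gt_nhds hFT)
      have h2 : ∀ᶠ t in 𝓝[>] T, 0 < slope f T t := by
        apply h1.filter_mono
        apply nhdsWithin_mono
        intro t ht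
        exact (ne_of_gt ht)
      filter_upwards [h2, self_mem_nhdsWithin] with t hts htT
      have htT' : T < t := htT
      rw [slope_def_field] at hts
      have hd : 0 < t - T := by linarith
      have : 0 < f t - f T := by
        by_contra hcon
        push_neg at hcon
        have := div_nonpos_of_nonpos_of_nonneg hcon hd.le
        linarith
      linarith [heq]
    · -- c < f T, use continuity
      have h1 : ∀ᶠ t in 𝓝 T, c < f t := hfc.continuousAt.eventually (eventually_gt_nhds hgt)
      exact h1.filter_mono nhdsWithin_le_nhds
  have hIoo : ∀ᶠ t in 𝓝[>] T, t ∈ Set.Ioo T s :=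
    Filter.eventually_of_mem (Ioo_mem_nhdsGT hTs') (fun _ h => h)
  obtain ⟨t, hct, hT_t, hts2⟩ := (hev.and hIoo).exists
  have htK : t ∈ K := ⟨⟨haT.trans hT_t.le, hts2.le⟩, le_of_lt hct⟩
  have : t ≤ T := le_csSup hKbd htK
  exact absurd hT_t (not_lt.mpr this)

lemma inv_upper (f F : ℝ → ℝ) (hf : ∀ s, HasDerivAt f (F s) s) (a c : ℝ)
    (ha : f a ≤ c) (hF : ∀ s, a ≤ s → f s = c → F s < 0) :
    ∀ s, a ≤ s → f s ≤ c := by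
  intro s hs
  have h := inv_lower (fun t => -f t) (fun t => -F t) (fun s => (hf s).neg) a (-c)
    (neg_le_neg ha) (fun t ht hft => by
      have hft' : -f t = -c := hft
      have hftc : f t = c := by linarith
      have := hF t ht hftc
      show 0 < -F t
      linarith) s hs
  have h' : -c ≤ -f s := h
  linarith

/-- Forward-in-time boundedness of `x`. -/
lemma stmt_5_fwd (A B : ℝ) (hA : 0 < A) (hB : 0 ≤ B) (x y : ℝ → ℝ)
    (hx : ∀ s, HasDerivAt x (x s * y s + A) s)
    (hy : ∀ s, HasDerivAt y (-(x s) ^ 2 - B) s) :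
    ∃ M : ℝ, ∀ s, 0 ≤ s → |x s| ≤ M := by
  have hxc : Continuous x := Differentiable.continuous (fun t => (hx t).differentiableAt)
  have hyanti : Antitone y := by
    apply antitone_of_deriv_nonpos (fun t => (hy t).differentiableAt)
    intro t
    rw [(hy t).deriv]
    nlinarith [sq_nonneg (x t)]
  by_cases hcase : ∀ s, 0 ≤ s → 0 ≤ y s
  · -- Case A : y stays nonnegative forever
    have hy0 : 0 ≤ y 0 := hcase 0 le_rfl
    have hneg : ∀ s, 0 ≤ s → x s < 0 := by
      intro s₂ hs₂
      by_contra h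
      push_neg at h
      have hpos : ∀ s, s₂ ≤ s → 0 ≤ x s := by
        apply inv_lower x (fun s => x s * y s + A) hx s₂ 0 h
        intro s _ h0
        rw [h0]; simpa using hA
      have hgrow : ∀ s, s₂ ≤ s → x s₂ + A * (s - s₂) ≤ x s := by
        intro s hs
        apply grow_aux x _ hx A hs
        intro t ht
        have h1 : 0 ≤ x t := hpos t ht.1
        have h2 : 0 ≤ y t := hcase t (hs₂.trans ht.1)
        nlinarith
      set T : ℝ := y 0 / A ^ 2 + 1 with hTdef
      have hdivnn : 0 ≤ y 0 / A ^ 2 := div_nonneg hy0 (by positivity)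
      have hT0 : 0 < T := by rw [hTdef]; linarith
      have hx1 : ∀ t, s₂ + 1 ≤ t → A ≤ x t := by
        intro t ht
        have h1 := hgrow t (by linarith)
        have h2 := hpos s₂ le_rfl
        nlinarith
      have hdrop : y (s₂ + 1 + T) ≤ y (s₂ + 1) + (-(A ^ 2)) * (s₂ + 1 + T - (s₂ + 1)) := by
        apply decay_aux y _ hy (-(A ^ 2)) (by linarith)
        intro t ht
        have h1 : A ≤ x t := hx1 t ht.1
        nlinarith
      have hAT : A ^ 2 * T = y 0 + A ^ 2 := by
        rw [hTdef]
        field_simp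
      have hy1 : y (s₂ + 1) ≤ y 0 := hyanti (by linarith)
      have hfin : y (s₂ + 1 + T) < 0 := by nlinarith
      exact absurd (hcase _ (by linarith)) (not_le.mpr hfin)
    set m : ℝ := max 1 (8 * A * (y 0 + 1)) with hmdef
    have hm1 : (1 : ℝ) ≤ m := le_max_left _ _
    have hm8 : 8 * A * (y 0 + 1) ≤ m := le_max_right _ _
    have hlow : ∀ s, 0 ≤ s → -m ≤ x s := by
      intro s hs
      by_contra h
      push_neg at h
      have hdec : ∀ t, s ≤ t → x t ≤ x s + A * (t - s) := by
        intro t ht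
        apply decay_aux x _ hx A ht
        intro u hu
        have h1 := hneg u (hs.trans hu.1)
        have h2 := hcase u (hs.trans hu.1)
        nlinarith
      set d : ℝ := m / (2 * A) with hddef
      have hd : 0 < d := by positivity
      have hhalf : ∀ t, t ∈ Set.Icc s (s + d) → x t ≤ -(m / 2) := by
        intro t ht
        have h1 := hdec t ht.1
        have h2 : t - s ≤ d := by have := ht.2; linarith
        have h3 : A * (t - s) ≤ A * d := by nlinarith
        have h4 : A * d = m / 2 := by
          rw [hddef]; field_simp
        linarith
      have hdrop : y (s + d) ≤ y s + (-(m ^ 2 / 4)) * (s + d - s) := by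
        apply decay_aux y _ hy (-(m ^ 2 / 4)) (by linarith)
        intro t ht
        have h1 := hhalf t ht
        nlinarith
      have hys : y s ≤ y 0 := hyanti hs
      have hm3 : 8 * A * (y 0 + 1) ≤ m ^ 3 := by nlinarith
      have hmd : m ^ 2 / 4 * d = m ^ 3 / (8 * A) := by
        rw [hddef]; field_simp; ring
      have h8A : y 0 + 1 ≤ m ^ 3 / (8 * A) := by
        rw [le_div_iff₀ (by positivity)]
        nlinarith
      have hfin : y (s + d) < 0 := by
        have : s + d - s = d := by ring
        rw [this] at hdrop
        nlinarith
      exact absurd (hcase _ (by linarith)) (not_le.mpr hfin)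
    refine ⟨m, fun s hs => abs_le.mpr ⟨hlow s hs, ?_⟩⟩
    linarith [hneg s hs]
  · -- Case B : y eventually negative
    push_neg at hcase
    obtain ⟨s₁, hs₁0, hy₁⟩ := hcase
    set ε : ℝ := -y s₁ with hεdef
    have hε : 0 < ε := by simp [hεdef]; linarith
    have hyle : ∀ s, s₁ ≤ s → y s ≤ -ε := by
      intro s hs
      have := hyanti hs
      simp [hεdef]; linarith
    obtain ⟨C, hC⟩ := (isCompact_Icc (a := (0:ℝ)) (b := s₁)).exists_bound_of_continuousOn
      hxc.continuousOn
    set u : ℝ := max (x s₁) ((A + 1) / ε) with hudef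
    set l : ℝ := min (x s₁) 0 with hldef
    have hup : ∀ s, s₁ ≤ s → x s ≤ u := by
      apply inv_upper x _ hx s₁ u (le_max_left _ _)
      intro s hs hfs
      have h1 : (A + 1) / ε ≤ x s := by rw [hfs]; exact le_max_right _ _
      have h2 : y s ≤ -ε := hyle s hs
      have hxpos : 0 < x s := lt_of_lt_of_le (div_pos (by linarith) hε) h1
      have h4 : A + 1 ≤ x s * ε := by
        calc A + 1 = (A + 1) / ε * ε := by field_simp
        _ ≤ x s * ε := mul_le_mul_of_nonneg_right h1 hε.le
      have h5 : x s * y s ≤ x s * (-ε) := mul_le_mul_of_nonneg_left h2 hxpos.le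
      have h6 : x s * (-ε) = -(x s * ε) := by ring
      linarith
    have hlo : ∀ s, s₁ ≤ s → l ≤ x s := by
      apply inv_lower x _ hx s₁ l (min_le_left _ _)
      intro s hs hfs
      have h1 : x s ≤ 0 := by rw [hfs]; exact min_le_right _ _
      have h2 : y s ≤ -ε := hyle s hs
      have h3 : 0 ≤ x s * y s := by
        nlinarith [mul_nonneg (neg_nonneg.mpr h1) (neg_nonneg.mpr (show y s ≤ 0 by linarith))]
      linarith
    refine ⟨max C (max u (-l)), fun s hs => ?_⟩
    rcases le_total s s₁ with h | h
    · have := hC s ⟨hs, h⟩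
      rw [Real.norm_eq_abs] at this
      exact this.trans (le_max_left _ _)
    · have h1 := hup s h
      have h2 := hlo s h
      have h3 : u ≤ max C (max u (-l)) := le_trans (le_max_left _ _) (le_max_right _ _)
      have h4 : -l ≤ max C (max u (-l)) := le_trans (le_max_right _ _) (le_max_right _ _)
      exact abs_le.mpr ⟨by linarith, by linarith⟩

/-- If `A > 0`, `B ≥ 0` and `(x, y)` solves `x' = xy + A`, `y' = -x² - B`
on `ℝ`, then `x` is bounded. -/
theorem stmt_5 (A B : ℝ) (hA : 0 < A) (hB : 0 ≤ B) (x y : ℝ → ℝ)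
    (hx : ∀ s, HasDerivAt x (x s * y s + A) s)
    (hy : ∀ s, HasDerivAt y (-(x s) ^ 2 - B) s) :
    ∃ M : ℝ, ∀ s, |x s| ≤ M := by
  obtain ⟨M₁, hM₁⟩ := stmt_5_fwd A B hA hB x y hx hy
  -- reflected solution
  have hneg1 : ∀ s : ℝ, HasDerivAt (fun t : ℝ => -t) (-1 : ℝ) s := fun s => (hasDerivAt_id s).neg
  have hx2 : ∀ s, HasDerivAt (fun t => -x (-t))
      ((fun t => -x (-t)) s * (fun t => -y (-t)) s + A) s := by
    intro s
    have h2 : HasDerivAt (fun t => x (-t)) ((x (-s) * y (-s) + A) * (-1)) s :=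
      (hx (-s)).comp s (hneg1 s)
    have h3 : HasDerivAt (fun t => -x (-t)) (-((x (-s) * y (-s) + A) * (-1))) s := h2.neg
    convert h3 using 1
    beta_reduce
    ring
  have hy2 : ∀ s, HasDerivAt (fun t => -y (-t)) (-((fun t => -x (-t)) s) ^ 2 - B) s := by
    intro s
    have h2 : HasDerivAt (fun t => y (-t)) ((-(x (-s)) ^ 2 - B) * (-1)) s :=
      (hy (-s)).comp s (hneg1 s)
    have h3 : HasDerivAt (fun t => -y (-t)) (-((-(x (-s)) ^ 2 - B) * (-1))) s := h2.neg
    convert h3 using 1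
    beta_reduce
    ring
  obtain ⟨M₂, hM₂⟩ := stmt_5_fwd A B hA hB (fun t => -x (-t)) (fun t => -y (-t)) hx2 hy2
  refine ⟨max M₁ M₂, fun s => ?_⟩
  rcases le_total 0 s with h | h
  · exact (hM₁ s h).trans (le_max_left _ _)
  · have := hM₂ (-s) (by linarith)
    simp only [neg_neg, abs_neg] at this
    exact this.trans (le_max_right _ _)
end

section
/- Let A > 0 and B ≥ 0, and let (x, y) solve x'(s) = x(s)y(s) + A, y'(s) = -x(s)^2 - B on ℝ. Then y(s) → -∞ as s → +∞ and y(s) → +∞ as s → -∞. -/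
open Filter Topology

lemma barrier_aux {f f' : ℝ → ℝ} (hf : ∀ s, HasDerivAt f (f' s) s) {c a : ℝ}
    (ha : c < f a) (hd : ∀ u, a ≤ u → f u = c → 0 < f' u) :
    ∀ s, a ≤ s → c < f s := by
  intro s₁ hs₁
  by_contra hcon
  push_neg at hcon
  have hcont : Continuous f := continuous_iff_continuousAt.2 fun s => (hf s).continuousAt
  set S : Set ℝ := {u | u ∈ Set.Icc a s₁ ∧ f u = c} with hS
  have hSne : S.Nonempty := by
    have : c ∈ Set.Icc (f s₁) (f a) := ⟨hcon, le_of_lt ha⟩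
    obtain ⟨r, hr, hfr⟩ := intermediate_value_Icc' hs₁ hcont.continuousOn this
    exact ⟨r, hr, hfr⟩
  have hSclosed : IsClosed S := by
    have : S = Set.Icc a s₁ ∩ f ⁻¹' {c} := by
      ext u; simp [hS, Set.mem_setOf_eq]
    rw [this]
    exact isClosed_Icc.inter (isClosed_singleton.preimage hcont)
  have hSbdd : BddBelow S := ⟨a, fun u hu => hu.1.1⟩
  set t := sInf S with htdef
  have htS : t ∈ S := hSclosed.csInf_mem hSne hSbdd
  obtain ⟨⟨hat, hts₁⟩, hft⟩ := htS
  have hat' : a < t := lt_of_le_of_ne hat (by intro h; rw [← h] at hft; exact absurd hft (ne_of_gt ha))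
  have hgt : ∀ u, u ∈ Set.Ico a t → c < f u := by
    rintro u ⟨hau, hut⟩
    by_contra hle
    push_neg at hle
    have : c ∈ Set.Icc (f u) (f a) := ⟨hle, le_of_lt ha⟩
    obtain ⟨r, hr, hfr⟩ := intermediate_value_Icc' hau hcont.continuousOn this
    have hrS : r ∈ S := ⟨⟨hr.1, le_trans hr.2 (le_trans (le_of_lt hut) hts₁)⟩, hfr⟩
    exact absurd (csInf_le hSbdd hrS) (not_le.2 (lt_of_le_of_lt hr.2 hut))
  have hd' : 0 < f' t := hd t hat hft
  have hslope := hasDerivAt_iff_tendsto_slope.1 (hf t)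
  have hev : ∀ᶠ u in 𝓝[≠] t, 0 < slope f t u := hslope (Ioi_mem_nhds hd')
  have hev' : ∀ᶠ u in 𝓝[<] t, 0 < slope f t u :=
    hev.filter_mono (nhdsWithin_mono t fun u hu => ne_of_lt hu)
  have hmem : ∀ᶠ u in 𝓝[<] t, u ∈ Set.Ioo a t :=
    eventually_of_mem (Ioo_mem_nhdsLT_of_mem ⟨hat', le_refl t⟩) fun u hu => hu
  obtain ⟨u, hu, hau', hut⟩ := (hev'.and hmem).exists
  have hfu : f u < f t := by
    rw [slope_def_field] at hu
    rcases div_pos_iff.1 hu with ⟨h1, h2⟩ | ⟨h1, h2⟩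
    · exact absurd h2 (not_lt.2 (le_of_lt (sub_neg.2 hut)))
    · linarith
  exact absurd (hgt u ⟨le_of_lt hau', hut⟩) (not_lt.2 (le_of_lt (hfu.trans_le (le_of_eq hft))))

lemma decay_aux_s6 {f f' : ℝ → ℝ} (hf : ∀ s, HasDerivAt f (f' s) s) {a k : ℝ}
    (hd : ∀ s, a ≤ s → f' s ≤ -k) : ∀ s, a ≤ s → f s ≤ f a - k * (s - a) := by
  intro s hs
  set g : ℝ → ℝ := fun u => f u + k * u with hg
  have hg' : ∀ u, HasDerivAt g (f' u + k) u := by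
    intro u
    have h2 : HasDerivAt (fun v : ℝ => k * v) k u := by
      simpa using (hasDerivAt_id u).const_mul k
    exact (hf u).add h2
  have hanti : AntitoneOn g (Set.Ici a) := by
    apply antitoneOn_of_deriv_nonpos (convex_Ici a)
      (fun u _ => ((hg' u).continuousAt).continuousWithinAt)
      (fun u hu => ((hg' u).differentiableAt).differentiableWithinAt)
    intro u hu
    rw [(hg' u).deriv]
    rw [interior_Ici] at hu
    linarith [hd u (le_of_lt hu)]
  have := hanti (Set.self_mem_Ici) hs hs
  simp only [hg] at this
  linarith

lemma growth_aux {f f' : ℝ → ℝ} (hf : ∀ s, HasDerivAt f (f' s) s) {a k : ℝ}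
    (hd : ∀ s, a ≤ s → k ≤ f' s) : ∀ s, a ≤ s → f a + k * (s - a) ≤ f s := by
  intro s hs
  have := decay_aux_s6 (f := fun u => -f u) (f' := fun u => -f' u)
    (fun u => (hf u).neg) (a := a) (k := k) (fun u hu => by simpa using hd u hu) s hs
  linarith

lemma key_aux (A B : ℝ) (hA : 0 < A) (hB : 0 ≤ B) (x y : ℝ → ℝ)
    (hx : ∀ s, HasDerivAt x (x s * y s + A) s)
    (hy : ∀ s, HasDerivAt y (-(x s) ^ 2 - B) s) :
    Tendsto y atTop atBot := by
  by_contra h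
  have hmono : Antitone y := by
    apply antitone_of_deriv_nonpos (fun s => (hy s).differentiableAt)
    intro s; rw [(hy s).deriv]; nlinarith [sq_nonneg (x s)]
  -- y is bounded below
  obtain ⟨b, hb⟩ : ∃ b, ∀ s, b < y s := by
    rw [tendsto_atTop_atBot] at h
    push_neg at h
    obtain ⟨b, hb⟩ := h
    refine ⟨b, fun s => ?_⟩
    obtain ⟨n, hn, hbn⟩ := hb s
    exact lt_of_lt_of_le hbn (hmono hn)
  -- a bound on |y| on [0, ∞)
  set C : ℝ := |b| + |y 0| + 1 with hC
  have hC0 : 0 < C := by positivity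
  have hyC : ∀ s, 0 ≤ s → -C ≤ y s ∧ y s ≤ C := by
    intro s hs
    constructor
    · have := hb s
      have : -|b| ≤ b := neg_abs_le b
      have : b ≤ |b| := le_abs_self b
      have h0 : -C ≤ b := by simp only [hC]; nlinarith [abs_nonneg (y 0), abs_nonneg b]
      linarith [hb s]
    · have h1 : y s ≤ y 0 := hmono hs
      have : y 0 ≤ |y 0| := le_abs_self (y 0)
      simp only [hC]; nlinarith [abs_nonneg b]
  set ε : ℝ := A / (2 * C) with hε
  have hε0 : 0 < ε := by positivity
  have hεC : ε * C = A / 2 := by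
    field_simp [hε]
    rw [hε]; field_simp
  -- Step A: there is s₀ ≥ 0 with x s₀ > -ε
  obtain ⟨s₀, hs₀0, hxs₀⟩ : ∃ s₀, 0 ≤ s₀ ∧ -ε < x s₀ := by
    by_contra hcon
    push_neg at hcon
    have hdec : ∀ s, (0:ℝ) ≤ s → -(x s) ^ 2 - B ≤ -(ε ^ 2) := by
      intro s hs
      have := hcon s hs
      nlinarith
    have := decay_aux_s6 hy hdec
    set T : ℝ := max 0 ((y 0 - b) / ε ^ 2 + 1) with hT
    have hT0 : (0:ℝ) ≤ T := le_max_left _ _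
    have hT1 : (y 0 - b) / ε ^ 2 + 1 ≤ T := le_max_right _ _
    have h2 := this T hT0
    have h3 : y 0 - b + ε ^ 2 ≤ ε ^ 2 * T := by
      have := mul_le_mul_of_nonneg_left hT1 (le_of_lt (by positivity : (0:ℝ) < ε ^ 2))
      calc y 0 - b + ε ^ 2 = ε ^ 2 * ((y 0 - b) / ε ^ 2 + 1) := by
            field_simp
        _ ≤ ε ^ 2 * T := this
    have := hb T
    nlinarith
  -- Step B: barrier at -ε : x > -ε on [s₀, ∞)
  have hbar1 : ∀ s, s₀ ≤ s → -ε < x s := by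
    apply barrier_aux hx hxs₀
    intro u hu hxu
    have hy_u := (hyC u (le_trans hs₀0 hu)).2
    rw [hxu]
    nlinarith
  -- Step C: there is s₂ ≥ s₀ with x s₂ > ε/2
  obtain ⟨s₂, hs₂0, hxs₂⟩ : ∃ s₂, s₀ ≤ s₂ ∧ ε / 2 < x s₂ := by
    by_contra hcon
    push_neg at hcon
    have hgrow : ∀ s, s₀ ≤ s → A / 2 ≤ x s * y s + A := by
      intro s hs
      have h1 := hbar1 s hs
      have h2 := hcon s hs
      have h3 := hyC s (le_trans hs₀0 hs)
      nlinarith [mul_nonneg (le_of_lt (show (0:ℝ) < ε + x s by linarith))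
          (show (0:ℝ) ≤ C + y s by linarith),
        mul_nonneg (show (0:ℝ) ≤ ε - x s by linarith)
          (show (0:ℝ) ≤ C - y s by linarith)]
    have hg := growth_aux hx hgrow
    set T : ℝ := max s₀ (s₀ + (ε / 2 - x s₀) / (A / 2) + 1) with hT
    have hT0 : s₀ ≤ T := le_max_left _ _
    have hT1 : s₀ + (ε / 2 - x s₀) / (A / 2) + 1 ≤ T := le_max_right _ _
    have h2 := hg T hT0
    have h3 := hcon T hT0
    have h4 : ε / 2 - x s₀ + A / 2 ≤ A / 2 * (T - s₀) := by
      have h5 : (ε / 2 - x s₀) / (A / 2) + 1 ≤ T - s₀ := by linarith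
      have := mul_le_mul_of_nonneg_left h5 (le_of_lt (by positivity : (0:ℝ) < A / 2))
      calc ε / 2 - x s₀ + A / 2 = A / 2 * ((ε / 2 - x s₀) / (A / 2) + 1) := by
            field_simp
        _ ≤ A / 2 * (T - s₀) := this
    linarith
  -- Step D: barrier at ε/2 : x > ε/2 on [s₂, ∞)
  have hbar2 : ∀ s, s₂ ≤ s → ε / 2 < x s := by
    apply barrier_aux hx hxs₂
    intro u hu hxu
    have hy_u := (hyC u (le_trans (le_trans hs₀0 hs₂0) hu)).1
    rw [hxu]
    nlinarith
  -- Step E: y decays to below b, contradiction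
  have hdec : ∀ s, s₂ ≤ s → -(x s) ^ 2 - B ≤ -(ε ^ 2 / 4) := by
    intro s hs
    have := hbar2 s hs
    nlinarith
  have hdy := decay_aux_s6 hy hdec
  set T : ℝ := max s₂ (s₂ + (y s₂ - b) / (ε ^ 2 / 4) + 1) with hT
  have hT0 : s₂ ≤ T := le_max_left _ _
  have hT1 : s₂ + (y s₂ - b) / (ε ^ 2 / 4) + 1 ≤ T := le_max_right _ _
  have h2 := hdy T hT0
  have h3 : y s₂ - b + ε ^ 2 / 4 ≤ ε ^ 2 / 4 * (T - s₂) := by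
    have h5 : (y s₂ - b) / (ε ^ 2 / 4) + 1 ≤ T - s₂ := by linarith
    have := mul_le_mul_of_nonneg_left h5 (le_of_lt (by positivity : (0:ℝ) < ε ^ 2 / 4))
    calc y s₂ - b + ε ^ 2 / 4 = ε ^ 2 / 4 * ((y s₂ - b) / (ε ^ 2 / 4) + 1) := by
          field_simp
      _ ≤ ε ^ 2 / 4 * (T - s₂) := this
  have := hb T
  have hε2 : 0 < ε ^ 2 / 4 := by positivity
  linarith

/-- If `A > 0`, `B ≥ 0` and `(x, y)` solves `x' = xy + A`, `y' = -x² - B`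
on `ℝ`, then `y → -∞` as `s → +∞` and `y → +∞` as `s → -∞`. -/
theorem stmt_6 (A B : ℝ) (hA : 0 < A) (hB : 0 ≤ B) (x y : ℝ → ℝ)
    (hx : ∀ s, HasDerivAt x (x s * y s + A) s)
    (hy : ∀ s, HasDerivAt y (-(x s) ^ 2 - B) s) :
    Tendsto y atTop atBot ∧ Tendsto y atBot atTop := by
  refine ⟨key_aux A B hA hB x y hx hy, ?_⟩
  -- the time/space reversed pair solves the same system
  have hx' : ∀ s, HasDerivAt (fun t => -x (-t))
      ((fun t => -x (-t)) s * (fun t => -y (-t)) s + A) s := by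
    intro s
    have h1 : HasDerivAt (fun t : ℝ => x (-t)) (-(x (-s) * y (-s) + A)) s := by
      simpa [Function.comp_def] using (hx (-s)).comp s (hasDerivAt_neg s)
    have h2 : HasDerivAt (fun t => -x (-t)) (-(-(x (-s) * y (-s) + A))) s := h1.neg
    convert h2 using 1
    ring
  have hy' : ∀ s, HasDerivAt (fun t => -y (-t))
      (-((fun t => -x (-t)) s) ^ 2 - B) s := by
    intro s
    have h1 : HasDerivAt (fun t : ℝ => y (-t)) (-(-(x (-s)) ^ 2 - B)) s := by
      simpa [Function.comp_def] using (hy (-s)).comp s (hasDerivAt_neg s)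
    have h2 : HasDerivAt (fun t => -y (-t)) (-(-(-(x (-s)) ^ 2 - B))) s := h1.neg
    convert h2 using 1
    ring
  have h2 := key_aux A B hA hB _ _ hx' hy'
  have h3 : Tendsto (fun s => y (-s)) atTop atTop := by
    rw [← tendsto_neg_atBot_iff]
    exact h2
  have h4 := h3.comp tendsto_neg_atBot_atTop
  have heq : ((fun s => y (-s)) ∘ Neg.neg) = y := by funext s; simp
  rwa [heq] at h4
end

section
/- Let A > 0 and B ≥ 0, and let (x, y) solve x'(s) = x(s)y(s) + A, y'(s) = -x(s)^2 - B on ℝ. Then x(s)² + y(s)² → ∞ as s → ±∞, and the function τ(s) = (A·x(s) - B·y(s))/(A² + B²) has exactly one zero; consequently the radius r = √(x² + y²)/√(A² + B²) has exactly one extremum, a global minimum. -/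
open Filter Topology Set

section helpers
open Filter Topology Set

lemma slope_left' {f : ℝ → ℝ} {d t : ℝ} (hf : HasDerivAt f d t) (hd : 0 < d) :
    ∀ᶠ z in 𝓝[<] t, f z < f t := by
  have h := hasDerivAt_iff_tendsto_slope.1 hf
  have h2 : ∀ᶠ z in 𝓝[≠] t, 0 < slope f t z := h.eventually (eventually_gt_nhds hd)
  have h3 : 𝓝[<] t ≤ 𝓝[≠] t := nhdsWithin_mono _ (fun z hz => ne_of_lt hz)
  filter_upwards [h3 h2, self_mem_nhdsWithin] with z hz hz'
  have hzt : z - t < 0 := sub_neg.2 hz'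
  rw [slope_def_field] at hz
  rw [div_pos_iff] at hz
  rcases hz with ⟨h1, h2'⟩ | ⟨h1, h2'⟩
  · linarith [sub_pos.1 h2']
  · linarith [sub_neg.1 h1]

lemma slope_right' {f : ℝ → ℝ} {d t : ℝ} (hf : HasDerivAt f d t) (hd : 0 < d) :
    ∀ᶠ z in 𝓝[>] t, f t < f z := by
  have h := hasDerivAt_iff_tendsto_slope.1 hf
  have h2 : ∀ᶠ z in 𝓝[≠] t, 0 < slope f t z := h.eventually (eventually_gt_nhds hd)
  have h3 : 𝓝[>] t ≤ 𝓝[≠] t := nhdsWithin_mono _ (fun z hz => ne_of_gt hz)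
  filter_upwards [h3 h2, self_mem_nhdsWithin] with z hz hz'
  have hzt : 0 < z - t := sub_pos.2 hz'
  rw [slope_def_field] at hz
  rw [div_pos_iff] at hz
  rcases hz with ⟨h1, h2'⟩ | ⟨h1, h2'⟩
  · linarith [sub_pos.1 h1]
  · linarith

lemma no_left_min' {f : ℝ → ℝ} {d a t : ℝ} (hf : HasDerivAt f d t) (hd : 0 < d)
    (ha : a < t) (h : ∀ z, a ≤ z → z ≤ t → f t ≤ f z) : False := by
  have hev := slope_left' hf hd
  have hev2 : Ioo a t ∈ 𝓝[<] t := Ioo_mem_nhdsLT_of_mem ⟨ha, le_refl t⟩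
  have hfalse : ∀ᶠ z in 𝓝[<] t, False := by
    filter_upwards [hev, hev2] with z h1 h2
    exact absurd (h z h2.1.le h2.2.le) (not_le.2 h1)
  exact hfalse.exists.elim (fun _ h => h)

lemma barrier' {f f' : ℝ → ℝ} (hf : ∀ t, HasDerivAt f (f' t) t)
    {b s₁ s₂ : ℝ}
    (hpos : ∀ t, s₁ ≤ t → t ≤ s₂ → f t = b → 0 < f' t)
    (h₁ : b ≤ f s₁) : ∀ t, s₁ ≤ t → t ≤ s₂ → b ≤ f t := by
  by_contra h
  push_neg at h
  obtain ⟨t, ht₁, ht₂, htb⟩ := h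
  set S := {t | (s₁ ≤ t ∧ t ≤ s₂) ∧ f t < b} with hS
  have hne : S.Nonempty := ⟨t, ⟨ht₁, ht₂⟩, htb⟩
  have hbd : BddBelow S := ⟨s₁, fun z hz => hz.1.1⟩
  set t₀ := sInf S with ht₀def
  have ht₀1 : s₁ ≤ t₀ := le_csInf hne (fun z hz => hz.1.1)
  have ht₀2 : t₀ ≤ s₂ := le_trans (csInf_le hbd ⟨⟨ht₁, ht₂⟩, htb⟩) ht₂
  have hcont : Continuous f := continuous_iff_continuousAt.2 (fun t => (hf t).continuousAt)
  have hfle : f t₀ ≤ b := by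
    have hcl : t₀ ∈ closure S := csInf_mem_closure hne hbd
    have hsub : closure S ⊆ {z | f z ≤ b} :=
      closure_minimal (fun z hz => le_of_lt hz.2) (isClosed_le hcont continuous_const)
    exact hsub hcl
  have hfge : b ≤ f t₀ := by
    rcases eq_or_lt_of_le ht₀1 with h | h
    · rw [← h]; exact h₁
    · have hev : ∀ᶠ z in 𝓝[<] t₀, b ≤ f z := by
        filter_upwards [Ioo_mem_nhdsLT_of_mem (⟨h, le_refl t₀⟩ : t₀ ∈ Set.Ioc s₁ t₀)] with z hz
        by_contra hzb
        push_neg at hzb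
        have hzS : z ∈ S := ⟨⟨hz.1.le, le_trans hz.2.le ht₀2⟩, hzb⟩
        exact absurd (csInf_le hbd hzS) (not_le.2 hz.2)
      exact ge_of_tendsto (hcont.continuousAt.tendsto.mono_left nhdsWithin_le_nhds) hev
  have hf0 : f t₀ = b := le_antisymm hfle hfge
  have hpos0 : 0 < f' t₀ := hpos t₀ ht₀1 ht₀2 hf0
  have hev : ∀ᶠ z in 𝓝[>] t₀, f t₀ < f z := slope_right' (hf t₀) hpos0
  have hfreq : ∃ᶠ z in 𝓝[>] t₀, f z < b := by
    rw [(nhdsGT_basis t₀).frequently_iff]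
    intro ε hε
    obtain ⟨z, hzS, hzlt⟩ := exists_lt_of_csInf_lt hne hε
    have hzge : t₀ ≤ z := csInf_le hbd hzS
    have hzne : t₀ ≠ z := by
      intro he
      rw [← he] at hzS
      exact absurd hf0 (ne_of_lt hzS.2)
    exact ⟨z, ⟨lt_of_le_of_ne hzge hzne, hzlt⟩, hzS.2⟩
  obtain ⟨z, hz1, hz2⟩ := (hfreq.and_eventually hev).exists
  rw [hf0] at hz2
  exact absurd hz1 (not_lt.2 hz2.le)

lemma growth' {f f' : ℝ → ℝ} (hf : ∀ t, HasDerivAt f (f' t) t) {a b c : ℝ}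
    (hab : a ≤ b) (hc : ∀ t, a ≤ t → t ≤ b → c ≤ f' t) : c * (b - a) ≤ f b - f a := by
  have := (convex_Icc a b).mul_sub_le_image_sub_of_le_deriv
    (fun t _ => (hf t).continuousAt.continuousWithinAt)
    (fun t _ => (hf t).differentiableAt.differentiableWithinAt)
    (fun t ht => by
      rw [interior_Icc] at ht
      rw [(hf t).deriv]
      exact hc t ht.1.le ht.2.le)
    a (Set.left_mem_Icc.2 hab) b (Set.right_mem_Icc.2 hab) hab
  exact this

lemma barrier_back' {f f' : ℝ → ℝ} (hf : ∀ t, HasDerivAt f (f' t) t) {b s₁ s₂ : ℝ}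
    (hpos : ∀ t, s₁ ≤ t → t ≤ s₂ → f t = b → 0 < f' t)
    (h₂ : f s₂ ≤ b) : ∀ t, s₁ ≤ t → t ≤ s₂ → f t ≤ b := by
  intro t ht1 ht2
  by_contra hgt
  push_neg at hgt
  have hbar : ∀ z, t ≤ z → z ≤ s₂ → b ≤ f z :=
    barrier' hf (fun z hz1 hz2 => hpos z (le_trans ht1 hz1) hz2) hgt.le
  have hfs₂ : f s₂ = b := le_antisymm h₂ (hbar s₂ ht2 le_rfl)
  have hts₂ : t < s₂ := lt_of_le_of_ne ht2 (fun he => by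
    rw [he] at hgt; exact absurd h₂ (not_le.2 hgt))
  exact no_left_min' (hf s₂) (hpos s₂ (le_trans ht1 ht2) le_rfl hfs₂) hts₂
    (fun z hz1 hz2 => by rw [hfs₂]; exact hbar z hz1 hz2)
end helpers

/-- If `A > 0`, `B ≥ 0` and `(x, y)` solves `x' = xy + A`, `y' = -x² - B`
on `ℝ`, then `x² + y² → ∞` as `s → ±∞`, the function `τ = (Ax - By)/(A² + B²)` has
exactly one zero, and the radius `r = √(x² + y²)/√(A² + B²)` has exactly one extremum,
a global minimum: it is strictly decreasing before that point and strictly increasing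
after it. -/
theorem stmt_7 (A B : ℝ) (hA : 0 < A) (hB : 0 ≤ B) (x y : ℝ → ℝ)
    (hx : ∀ s, HasDerivAt x (x s * y s + A) s)
    (hy : ∀ s, HasDerivAt y (-(x s) ^ 2 - B) s)
    (τ r : ℝ → ℝ)
    (hτ : ∀ s, τ s = (A * x s - B * y s) / (A ^ 2 + B ^ 2))
    (hr : ∀ s, r s = Real.sqrt ((x s) ^ 2 + (y s) ^ 2) / Real.sqrt (A ^ 2 + B ^ 2)) :
    Tendsto (fun s => (x s) ^ 2 + (y s) ^ 2) atTop atTop ∧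
    Tendsto (fun s => (x s) ^ 2 + (y s) ^ 2) atBot atTop ∧
    (∃! s₀, τ s₀ = 0) ∧
    (∃ s₀, τ s₀ = 0 ∧ StrictAntiOn r (Set.Iic s₀) ∧ StrictMonoOn r (Set.Ici s₀) ∧
      ∀ s, r s₀ ≤ r s) := by
  obtain ⟨C, hCeq⟩ : ∃ C : ℝ, C = A ^ 2 + B ^ 2 := ⟨_, rfl⟩
  have hC0 : (0:ℝ) < C := by rw [hCeq]; positivity
  obtain ⟨u, hus⟩ : ∃ u : ℝ → ℝ, ∀ s, u s = x s ^ 2 + y s ^ 2 := ⟨_, fun s => rfl⟩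
  have hu0 : ∀ s, 0 ≤ u s := fun s => by rw [hus]; positivity
  have hu' : ∀ s, HasDerivAt u (2 * C * τ s) s := by
    intro s
    have h1 : HasDerivAt (fun t => x t ^ 2 + y t ^ 2)
        (((2:ℕ) : ℝ) * x s ^ 1 * (x s * y s + A) + ((2:ℕ) : ℝ) * y s ^ 1 * (-(x s) ^ 2 - B)) s :=
      ((hx s).pow 2).add ((hy s).pow 2)
    have hfun : u = fun t => x t ^ 2 + y t ^ 2 := funext hus
    rw [hfun]
    convert h1 using 1
    rw [hτ s, hCeq]
    have : (A ^ 2 + B ^ 2) ≠ 0 := by positivity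
    field_simp
    ring
  obtain ⟨D, hDs⟩ : ∃ D : ℝ → ℝ, ∀ s,
      D s = (A * (x s * y s + A) - B * (-(x s) ^ 2 - B)) / C := ⟨_, fun s => rfl⟩
  have hτ' : ∀ s, HasDerivAt τ (D s) s := by
    intro s
    have h1 : HasDerivAt (fun t => (A * x t - B * y t) / C)
        ((A * (x s * y s + A) - B * (-(x s) ^ 2 - B)) / C) s :=
      (((hx s).const_mul A).sub ((hy s).const_mul B)).div_const C
    have hfun : τ = fun t => (A * x t - B * y t) / C := by
      funext t; rw [hτ t, hCeq]
    rw [hfun, hDs s]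
    exact h1
  have hDeq : ∀ s, D s = 1 + B * u s / C + τ s * y s := by
    intro s
    rw [hDs s, hτ s, hus s, ← hCeq]
    have : C ≠ 0 := ne_of_gt hC0
    field_simp
    rw [hCeq]
    ring
  have hDzero : ∀ s, τ s = 0 → 1 ≤ D s := by
    intro s hs
    rw [hDeq s, hs]
    have h1 : 0 ≤ B * u s / C := div_nonneg (mul_nonneg hB (hu0 s)) hC0.le
    linarith
  have hbound : ∀ M : ℝ, 0 ≤ M → ∀ s, u s ≤ M →
      |τ s| ≤ 1 / (2 * (Real.sqrt M + 1)) → 1 / 2 ≤ D s := by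
    intro M hM s hsM hτs
    have hq0 : 0 ≤ Real.sqrt M := Real.sqrt_nonneg M
    have hyb : |y s| ≤ Real.sqrt M := by
      apply Real.abs_le_sqrt
      have := hus s; nlinarith [sq_nonneg (x s)]
    have h3 : -(τ s * y s) ≤ |τ s| * |y s| := by
      rw [← abs_mul]; exact neg_le_abs _
    have h4 : |τ s| * |y s| ≤ 1 / (2 * (Real.sqrt M + 1)) * Real.sqrt M :=
      mul_le_mul hτs hyb (abs_nonneg _) (by positivity)
    have h5 : 1 / (2 * (Real.sqrt M + 1)) * Real.sqrt M ≤ 1 / 2 := by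
      rw [div_mul_eq_mul_div, one_mul, div_le_div_iff₀ (by positivity) (by norm_num)]
      linarith
    have h1 : 0 ≤ B * u s / C := div_nonneg (mul_nonneg hB (hu0 s)) hC0.le
    rw [hDeq s]
    linarith
  -- at most one zero
  have hkill : ∀ a b, a < b → τ a = 0 → τ b = 0 → False := by
    intro a b hab ha hb
    have hge : ∀ t, a ≤ t → t ≤ b → 0 ≤ τ t :=
      barrier' hτ' (fun t _ _ ht => lt_of_lt_of_le zero_lt_one (hDzero t ht)) ha.ge
    exact no_left_min' (hτ' b) (lt_of_lt_of_le zero_lt_one (hDzero b hb)) hab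
      (fun z h1 h2 => by rw [hb]; exact hge z h1 h2)
  have hτcont : Continuous τ := continuous_iff_continuousAt.2 fun t => (hτ' t).continuousAt
  have hucont : Continuous u := continuous_iff_continuousAt.2 fun t => (hu' t).continuousAt
  -- existence of a zero of τ
  have hexists : ∃ s₀, τ s₀ = 0 := by
    by_contra hno
    push_neg at hno
    have hivt : ∀ a b, τ a < 0 → 0 < τ b → False := by
      intro a b ha hb
      rcases le_or_gt a b with h | h
      · obtain ⟨c, _, hc⟩ := intermediate_value_Icc h hτcont.continuousOn
          (show (0:ℝ) ∈ Icc (τ a) (τ b) from ⟨ha.le, hb.le⟩)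
        exact hno c hc
      · obtain ⟨c, _, hc⟩ := intermediate_value_Icc' h.le hτcont.continuousOn
          (show (0:ℝ) ∈ Icc (τ a) (τ b) from ⟨ha.le, hb.le⟩)
        exact hno c hc
    have hM0 : 0 ≤ u 0 := hu0 0
    obtain ⟨δ, hδeq⟩ : ∃ δ : ℝ, δ = 1 / (2 * (Real.sqrt (u 0) + 1)) := ⟨_, rfl⟩
    have hq0 : 0 ≤ Real.sqrt (u 0) := Real.sqrt_nonneg _
    have hδ0 : 0 < δ := by rw [hδeq]; positivity
    have hE0 : 0 < 2 * C * δ := by positivity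
    rcases lt_or_gt_of_ne (hno 0) with hneg0 | hpos0
    · -- τ < 0 everywhere
      have hneg : ∀ s, τ s < 0 := by
        intro s
        rcases lt_or_gt_of_ne (hno s) with h | h
        · exact h
        · exact absurd (hivt 0 s hneg0 h) not_false
      have hub : ∀ t, 0 ≤ t → u t ≤ u 0 := by
        intro t ht
        have hg := growth' (c := 0) (fun s => (hu' s).neg) ht
          (fun z hz1 hz2 => by nlinarith [hneg z, hC0])
        simp only [Pi.neg_apply] at hg
        linarith
      have hs₁ : ∃ s₁, 0 ≤ s₁ ∧ -δ < τ s₁ := by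
        by_contra hcon
        push_neg at hcon
        obtain ⟨t, hteq⟩ : ∃ t : ℝ, t = (u 0 + 1) / (2 * C * δ) := ⟨_, rfl⟩
        have ht0 : 0 ≤ t := by rw [hteq]; positivity
        have hg := growth' (c := 2 * C * δ) (fun s => (hu' s).neg) ht0
          (fun z hz1 _ => by nlinarith [hcon z hz1, hC0])
        have htv : 2 * C * δ * (t - 0) = u 0 + 1 := by
          rw [hteq]; field_simp; ring
        have := hu0 t
        simp only [Pi.neg_apply] at hg
        linarith
      obtain ⟨s₁, hs₁0, hs₁δ⟩ := hs₁
      have hlow : ∀ T t, s₁ ≤ t → t ≤ T → -δ ≤ τ t := by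
        intro T
        refine barrier' hτ' (fun t ht1 _ ht => ?_) hs₁δ.le
        refine lt_of_lt_of_le (by norm_num) (hbound (u 0) hM0 t (hub t (le_trans hs₁0 ht1)) ?_)
        rw [ht, abs_neg, abs_of_pos hδ0, hδeq]
      obtain ⟨T, hTeq⟩ : ∃ T : ℝ, T = s₁ + 2 * δ + 1 := ⟨_, rfl⟩
      have hT1 : s₁ ≤ T := by rw [hTeq]; linarith
      have hg := growth' hτ' hT1 (fun z hz1 hz2 => by
        refine hbound (u 0) hM0 z (hub z (le_trans hs₁0 hz1)) ?_
        rw [← hδeq]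
        exact abs_le.2 ⟨hlow T z hz1 hz2, by linarith [hneg z, hδ0]⟩)
      have h1 := hneg T
      have h2 := hlow T s₁ le_rfl hT1
      have hT2 : T - s₁ = 2 * δ + 1 := by rw [hTeq]; ring
      linarith
    · -- τ > 0 everywhere
      have hpos : ∀ s, 0 < τ s := by
        intro s
        rcases lt_or_gt_of_ne (hno s) with h | h
        · exact absurd (hivt s 0 h hpos0) not_false
        · exact h
      have hub : ∀ t, t ≤ 0 → u t ≤ u 0 := by
        intro t ht
        have hg := growth' (c := 0) hu' ht
          (fun z hz1 hz2 => by nlinarith [hpos z, hC0])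
        linarith
      have hs₁ : ∃ s₁, s₁ ≤ 0 ∧ τ s₁ < δ := by
        by_contra hcon
        push_neg at hcon
        obtain ⟨t, hteq⟩ : ∃ t : ℝ, t = -((u 0 + 1) / (2 * C * δ)) := ⟨_, rfl⟩
        have ht0 : t ≤ 0 := by
          rw [hteq]
          have : 0 ≤ (u 0 + 1) / (2 * C * δ) := by positivity
          linarith
        have hg := growth' (c := 2 * C * δ) hu' ht0
          (fun z hz1 hz2 => by nlinarith [hcon z hz2, hC0])
        have htv : 2 * C * δ * (0 - t) = u 0 + 1 := by
          rw [hteq]; field_simp; ring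
        have := hu0 t
        linarith
      obtain ⟨s₁, hs₁0, hs₁δ⟩ := hs₁
      have hup : ∀ T t, T ≤ t → t ≤ s₁ → τ t ≤ δ := by
        intro T
        refine barrier_back' hτ' (fun t _ ht2 ht => ?_) hs₁δ.le
        refine lt_of_lt_of_le (by norm_num) (hbound (u 0) hM0 t (hub t (le_trans ht2 hs₁0)) ?_)
        rw [ht, abs_of_pos hδ0, hδeq]
      obtain ⟨T, hTeq⟩ : ∃ T : ℝ, T = s₁ - (2 * δ + 1) := ⟨_, rfl⟩
      have hT1 : T ≤ s₁ := by rw [hTeq]; linarith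
      have hg := growth' hτ' hT1 (fun z hz1 hz2 => by
        refine hbound (u 0) hM0 z (hub z (le_trans hz2 hs₁0)) ?_
        rw [← hδeq]
        exact abs_le.2 ⟨by linarith [hpos z, hδ0], hup T z hz1 hz2⟩)
      have h1 := hpos T
      have h2 := hup T s₁ hT1 le_rfl
      have hT2 : s₁ - T = 2 * δ + 1 := by rw [hTeq]; ring
      linarith
  obtain ⟨s₀, hτ0⟩ := hexists
  have huniq : ∀ a, τ a = 0 → a = s₀ := by
    intro a ha
    rcases lt_trichotomy a s₀ with h | h | h
    · exact absurd (hkill a s₀ h ha hτ0) not_false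
    · exact h
    · exact absurd (hkill s₀ a h hτ0 ha) not_false
  have hτnonneg : ∀ t, s₀ ≤ t → 0 ≤ τ t := fun t ht =>
    barrier' hτ' (fun z _ _ hz => lt_of_lt_of_le zero_lt_one (hDzero z hz)) hτ0.ge t ht le_rfl
  have hτnonpos : ∀ t, t ≤ s₀ → τ t ≤ 0 := fun t ht =>
    barrier_back' hτ' (fun z _ _ hz => lt_of_lt_of_le zero_lt_one (hDzero z hz)) hτ0.le t le_rfl ht
  have hsgn_pos : ∀ t, s₀ < t → 0 < τ t := by
    intro t ht
    rcases (hτnonneg t ht.le).lt_or_eq with h | h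
    · exact h
    · exact absurd (huniq t h.symm) (ne_of_gt ht)
  have hsgn_neg : ∀ t, t < s₀ → τ t < 0 := by
    intro t ht
    rcases (hτnonpos t ht.le).lt_or_eq with h | h
    · exact h
    · exact absurd (huniq t h) (ne_of_lt ht)
  have huanti : StrictAntiOn u (Iic s₀) := by
    apply strictAntiOn_of_deriv_neg (convex_Iic s₀) hucont.continuousOn
    intro t ht
    rw [interior_Iic] at ht
    rw [(hu' t).deriv]
    nlinarith [hsgn_neg t ht, hC0]
  have humono : StrictMonoOn u (Ici s₀) := by
    apply strictMonoOn_of_deriv_pos (convex_Ici s₀) hucont.continuousOn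
    intro t ht
    rw [interior_Ici] at ht
    rw [(hu' t).deriv]
    nlinarith [hsgn_pos t ht, hC0]
  have hrC : 0 < Real.sqrt C := Real.sqrt_pos.2 hC0
  have hru : ∀ s, r s = Real.sqrt (u s) / Real.sqrt C := by
    intro s; rw [hr s, hus s, hCeq]
  have hranti : StrictAntiOn r (Iic s₀) := by
    intro a ha b hb hab
    rw [hru a, hru b]
    have h1 : Real.sqrt (u b) < Real.sqrt (u a) :=
      Real.sqrt_lt_sqrt (hu0 b) (huanti ha hb hab)
    exact (div_lt_div_iff_of_pos_right hrC).2 h1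
  have hrmono : StrictMonoOn r (Ici s₀) := by
    intro a ha b hb hab
    rw [hru a, hru b]
    have h1 : Real.sqrt (u a) < Real.sqrt (u b) :=
      Real.sqrt_lt_sqrt (hu0 a) (humono ha hb hab)
    exact (div_lt_div_iff_of_pos_right hrC).2 h1
  have hrmin : ∀ s, r s₀ ≤ r s := by
    intro s
    rcases lt_trichotomy s s₀ with h | h | h
    · exact (hranti (mem_Iic.2 h.le) (mem_Iic.2 le_rfl) h).le
    · rw [h]
    · exact (hrmono (mem_Ici.2 le_rfl) (mem_Ici.2 h.le) h).le
  -- tendsto atTop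
  have hclaimtop : ∀ K : ℝ, ∃ s₁, s₀ ≤ s₁ ∧ K ≤ u s₁ := by
    intro K
    by_contra hcon
    push_neg at hcon
    obtain ⟨M, hMb, hM0⟩ : ∃ M, (∀ s, s₀ ≤ s → u s ≤ M) ∧ 0 ≤ M :=
      ⟨max K 0, fun s hs => le_trans (hcon s hs).le (le_max_left _ _), le_max_right _ _⟩
    obtain ⟨δ, hδeq⟩ : ∃ δ : ℝ, δ = 1 / (2 * (Real.sqrt M + 1)) := ⟨_, rfl⟩
    have hδ0 : 0 < δ := by rw [hδeq]; positivity
    have hstep : ∃ s₁, s₀ ≤ s₁ ∧ δ ≤ τ s₁ := by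
      by_contra hcon2
      push_neg at hcon2
      obtain ⟨t, hteq⟩ : ∃ t : ℝ, t = s₀ + 2 * δ + 1 := ⟨_, rfl⟩
      have ht0 : s₀ ≤ t := by rw [hteq]; linarith
      have hg := growth' hτ' ht0 (fun z hz1 hz2 => by
        refine hbound M hM0 z (hMb z hz1) ?_
        rw [← hδeq]
        exact abs_le.2 ⟨by linarith [hτnonneg z hz1, hδ0], (hcon2 z hz1).le⟩)
      rw [hτ0] at hg
      have ht2 : t - s₀ = 2 * δ + 1 := by rw [hteq]; ring
      linarith [hcon2 t ht0]
    obtain ⟨s₁, hs₁0, hs₁δ⟩ := hstep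
    have hlow : ∀ t, s₁ ≤ t → δ ≤ τ t := by
      intro t ht
      exact barrier' hτ' (fun z hz1 _ hz => lt_of_lt_of_le (by norm_num)
        (hbound M hM0 z (hMb z (le_trans hs₁0 hz1))
          (by rw [hz, abs_of_pos hδ0, hδeq]))) hs₁δ t ht le_rfl
    obtain ⟨T, hTeq⟩ : ∃ T : ℝ, T = s₁ + (M + 1) / (2 * C * δ) := ⟨_, rfl⟩
    have hT1 : s₁ ≤ T := by
      rw [hTeq]
      have : 0 ≤ (M + 1) / (2 * C * δ) := by positivity
      linarith
    have hg := growth' (c := 2 * C * δ) hu' hT1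
      (fun z hz1 _ => by nlinarith [hlow z hz1, hC0])
    have hTv : 2 * C * δ * (T - s₁) = M + 1 := by
      rw [hTeq]; field_simp; ring
    have h1 := hMb T (le_trans hs₁0 hT1)
    have h2 := hu0 s₁
    linarith
  have htop : Tendsto u atTop atTop := by
    rw [tendsto_atTop_atTop]
    intro K
    obtain ⟨s₁, hs₁, hK⟩ := hclaimtop K
    exact ⟨s₁, fun a ha => le_trans hK
      (humono.monotoneOn (mem_Ici.2 hs₁) (mem_Ici.2 (le_trans hs₁ ha)) ha)⟩
  -- tendsto atBot
  have hclaimbot : ∀ K : ℝ, ∃ s₁, s₁ ≤ s₀ ∧ K ≤ u s₁ := by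
    intro K
    by_contra hcon
    push_neg at hcon
    obtain ⟨M, hMb, hM0⟩ : ∃ M, (∀ s, s ≤ s₀ → u s ≤ M) ∧ 0 ≤ M :=
      ⟨max K 0, fun s hs => le_trans (hcon s hs).le (le_max_left _ _), le_max_right _ _⟩
    obtain ⟨δ, hδeq⟩ : ∃ δ : ℝ, δ = 1 / (2 * (Real.sqrt M + 1)) := ⟨_, rfl⟩
    have hδ0 : 0 < δ := by rw [hδeq]; positivity
    have hstep : ∃ s₁, s₁ ≤ s₀ ∧ τ s₁ ≤ -δ := by
      by_contra hcon2
      push_neg at hcon2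
      obtain ⟨t, hteq⟩ : ∃ t : ℝ, t = s₀ - (2 * δ + 1) := ⟨_, rfl⟩
      have ht0 : t ≤ s₀ := by rw [hteq]; linarith
      have hg := growth' hτ' ht0 (fun z hz1 hz2 => by
        refine hbound M hM0 z (hMb z hz2) ?_
        rw [← hδeq]
        exact abs_le.2 ⟨(hcon2 z hz2).le, by linarith [hτnonpos z hz2, hδ0]⟩)
      rw [hτ0] at hg
      have ht2 : s₀ - t = 2 * δ + 1 := by rw [hteq]; ring
      linarith [hcon2 t ht0]
    obtain ⟨s₁, hs₁0, hs₁δ⟩ := hstep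
    have hhigh : ∀ t, t ≤ s₁ → τ t ≤ -δ := by
      intro t ht
      exact barrier_back' hτ' (fun z _ hz2 hz => lt_of_lt_of_le (by norm_num)
        (hbound M hM0 z (hMb z (le_trans hz2 hs₁0))
          (by rw [hz, abs_neg, abs_of_pos hδ0, hδeq]))) hs₁δ t le_rfl ht
    obtain ⟨T, hTeq⟩ : ∃ T : ℝ, T = s₁ - (M + 1) / (2 * C * δ) := ⟨_, rfl⟩
    have hT1 : T ≤ s₁ := by
      rw [hTeq]
      have : 0 ≤ (M + 1) / (2 * C * δ) := by positivity
      linarith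
    have hg := growth' (c := 2 * C * δ) (fun s => (hu' s).neg) hT1
      (fun z _ hz2 => by nlinarith [hhigh z hz2, hC0])
    have hTv : 2 * C * δ * (s₁ - T) = M + 1 := by
      rw [hTeq]; field_simp; ring
    have h1 := hMb T (le_trans hT1 hs₁0)
    have h2 := hu0 s₁
    simp only [Pi.neg_apply] at hg
    linarith
  have hbot : Tendsto u atBot atTop := by
    rw [tendsto_atBot_atTop]
    intro K
    obtain ⟨s₁, hs₁, hK⟩ := hclaimbot K
    exact ⟨s₁, fun a ha => le_trans hK
      (huanti.antitoneOn (mem_Iic.2 (le_trans ha hs₁)) (mem_Iic.2 hs₁) ha)⟩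
  have hulam : (fun s => x s ^ 2 + y s ^ 2) = u := funext fun s => (hus s).symm
  refine ⟨by rw [hulam]; exact htop, by rw [hulam]; exact hbot,
    ⟨s₀, hτ0, fun z hz => huniq z hz⟩, s₀, hτ0, hranti, hrmono, hrmin⟩
end

section
/- Let A > 0 and B ≥ 0, and let (x, y) solve x'(s) = x(s)y(s) + A, y'(s) = -x(s)^2 - B on ℝ. Then x attains a negative global minimum and a positive global maximum, and x has no other local extrema. -/
open Set Filter Topology

/-- If `g m = 0` and `g' m < 0` then `g < 0` just to the right of `m`. -/
lemma ssf_right_neg {g : ℝ → ℝ} {m D : ℝ} (hg : HasDerivAt g D m) (hgm : g m = 0)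
    (hD : D < 0) : ∃ δ > 0, ∀ s ∈ Set.Ioo m (m + δ), g s < 0 := by
  have h := hasDerivAt_iff_tendsto_slope.mp hg
  have h1 : ∀ᶠ s in 𝓝[≠] m, slope g m s < 0 := h.eventually_lt_const hD
  have h2 : ∀ᶠ s in 𝓝[>] m, slope g m s < 0 :=
    h1.filter_mono (nhdsWithin_mono _ (fun s hs => ne_of_gt hs))
  rcases mem_nhdsGT_iff_exists_Ioo_subset.mp h2 with ⟨u, hu, hsub⟩
  refine ⟨u - m, by simpa using hu, fun s hs => ?_⟩
  have hs' : s ∈ Set.Ioo m u := by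
    constructor
    · exact hs.1
    · have := hs.2; linarith
  have := hsub hs'
  simp only [Set.mem_setOf_eq, slope_def_field, hgm, sub_zero] at this
  have hsm : 0 < s - m := by have := hs.1; linarith
  by_contra hcon
  push_neg at hcon
  have : 0 ≤ g s / (s - m) := div_nonneg hcon (le_of_lt hsm)
  linarith

/-- If `g m = 0` and `g' m < 0` then `g > 0` just to the left of `m`. -/
lemma ssf_left_pos {g : ℝ → ℝ} {m D : ℝ} (hg : HasDerivAt g D m) (hgm : g m = 0)
    (hD : D < 0) : ∃ δ > 0, ∀ s ∈ Set.Ioo (m - δ) m, 0 < g s := by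
  have h := hasDerivAt_iff_tendsto_slope.mp hg
  have h1 : ∀ᶠ s in 𝓝[≠] m, slope g m s < 0 := h.eventually_lt_const hD
  have h2 : ∀ᶠ s in 𝓝[<] m, slope g m s < 0 :=
    h1.filter_mono (nhdsWithin_mono _ (fun s hs => ne_of_lt hs))
  rcases mem_nhdsLT_iff_exists_Ioo_subset.mp h2 with ⟨u, hu, hsub⟩
  refine ⟨m - u, by simp at hu ⊢; linarith, fun s hs => ?_⟩
  have hs' : s ∈ Set.Ioo u m := by
    constructor
    · have := hs.1; linarith
    · exact hs.2
  have := hsub hs'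
  simp only [Set.mem_setOf_eq, slope_def_field, hgm, sub_zero] at this
  have hsm : s - m < 0 := by have := hs.2; linarith
  by_contra hcon
  push_neg at hcon
  have : 0 ≤ g s / (s - m) := div_nonneg_of_nonpos hcon (le_of_lt hsm)
  linarith

/-- Monotone on a convex set from a derivative bound. -/
lemma ssf_monoOn {f f' : ℝ → ℝ} (hf : ∀ s, HasDerivAt f (f' s) s) {D : Set ℝ}
    (hD : Convex ℝ D) (h : ∀ s ∈ interior D, 0 ≤ f' s) : MonotoneOn f D := by
  refine monotoneOn_of_deriv_nonneg hD ?_ ?_ ?_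
  · exact (continuous_iff_continuousAt.mpr fun s => (hf s).continuousAt).continuousOn
  · exact fun s _ => (hf s).differentiableAt.differentiableWithinAt
  · intro s hs; rw [(hf s).deriv]; exact h s hs

lemma ssf_antiOn {f f' : ℝ → ℝ} (hf : ∀ s, HasDerivAt f (f' s) s) {D : Set ℝ}
    (hD : Convex ℝ D) (h : ∀ s ∈ interior D, f' s ≤ 0) : AntitoneOn f D := by
  refine antitoneOn_of_deriv_nonpos hD ?_ ?_ ?_
  · exact (continuous_iff_continuousAt.mpr fun s => (hf s).continuousAt).continuousOn
  · exact fun s _ => (hf s).differentiableAt.differentiableWithinAt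
  · intro s hs; rw [(hf s).deriv]; exact h s hs

section Main

variable {A B : ℝ} {x y : ℝ → ℝ}

lemma ssf_yanti (hy : ∀ s, HasDerivAt y (-(x s) ^ 2 - B) s) (hB : 0 ≤ B) : Antitone y := by
  refine antitone_of_deriv_nonpos (fun s => (hy s).differentiableAt) (fun s => ?_)
  rw [(hy s).deriv]
  nlinarith [sq_nonneg (x s)]

/-- Just to the right of a positive critical point, `x` drops below its value. -/
lemma ssf_after_lt (hA : 0 < A) (hB : 0 ≤ B)
    (hx : ∀ s, HasDerivAt x (x s * y s + A) s)
    (hy : ∀ s, HasDerivAt y (-(x s) ^ 2 - B) s)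
    {m : ℝ} (hm : x m * y m + A = 0) (hxm : 0 < x m) :
    ∃ δ > 0, ∀ ε, 0 < ε → ε ≤ δ → x (m + ε) < x m := by
  have hg : HasDerivAt (fun s => x s * y s + A)
      ((x m * y m + A) * y m + x m * (-(x m) ^ 2 - B)) m :=
    ((hx m).mul (hy m)).add_const A
  rw [hm] at hg
  have hD : 0 * y m + x m * (-(x m) ^ 2 - B) < 0 := by nlinarith [mul_pos hxm (by positivity : (0:ℝ) < x m ^ 2 + B)]
  obtain ⟨δ, hδ, hneg⟩ := ssf_right_neg hg hm hD
  refine ⟨δ, hδ, fun ε hε hεδ => ?_⟩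
  have hanti : StrictAntiOn x (Set.Icc m (m + ε)) := by
    refine strictAntiOn_of_deriv_neg (convex_Icc _ _)
      (continuous_iff_continuousAt.mpr fun s => (hx s).continuousAt).continuousOn ?_
    intro s hs
    rw [interior_Icc] at hs
    rw [(hx s).deriv]
    exact hneg s ⟨hs.1, lt_of_lt_of_le hs.2 (by linarith)⟩
  exact hanti (Set.left_mem_Icc.mpr (by linarith)) (Set.right_mem_Icc.mpr (by linarith))
    (by linarith)

/-- Just to the left of a positive critical point, `x` is below its value. -/
lemma ssf_before_lt (hA : 0 < A) (hB : 0 ≤ B)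
    (hx : ∀ s, HasDerivAt x (x s * y s + A) s)
    (hy : ∀ s, HasDerivAt y (-(x s) ^ 2 - B) s)
    {m : ℝ} (hm : x m * y m + A = 0) (hxm : 0 < x m) :
    ∃ δ > 0, ∀ ε, 0 < ε → ε ≤ δ → x (m - ε) < x m := by
  have hg : HasDerivAt (fun s => x s * y s + A)
      ((x m * y m + A) * y m + x m * (-(x m) ^ 2 - B)) m :=
    ((hx m).mul (hy m)).add_const A
  rw [hm] at hg
  have hD : 0 * y m + x m * (-(x m) ^ 2 - B) < 0 := by nlinarith [mul_pos hxm (by positivity : (0:ℝ) < x m ^ 2 + B)]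
  obtain ⟨δ, hδ, hpos⟩ := ssf_left_pos hg hm hD
  refine ⟨δ, hδ, fun ε hε hεδ => ?_⟩
  have hmono : StrictMonoOn x (Set.Icc (m - ε) m) := by
    refine strictMonoOn_of_deriv_pos (convex_Icc _ _)
      (continuous_iff_continuousAt.mpr fun s => (hx s).continuousAt).continuousOn ?_
    intro s hs
    rw [interior_Icc] at hs
    rw [(hx s).deriv]
    exact hpos s ⟨lt_of_le_of_lt (by linarith) hs.1, hs.2⟩
  exact hmono (Set.left_mem_Icc.mpr (by linarith)) (Set.right_mem_Icc.mpr (by linarith))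
    (by linarith)

end Main
section Main2

variable {A B : ℝ} {x y : ℝ → ℝ}

lemma ssf_uniq_aux (hA : 0 < A) (hB : 0 ≤ B)
    (hx : ∀ s, HasDerivAt x (x s * y s + A) s)
    (hy : ∀ s, HasDerivAt y (-(x s) ^ 2 - B) s)
    {a b : ℝ} (hca : x a * y a + A = 0) (hcb : x b * y b + A = 0)
    (hxa : 0 < x a) (hxb : 0 < x b) (hab : a < b) : False := by
  have hxc : Continuous x := continuous_iff_continuousAt.mpr fun s => (hx s).continuousAt
  obtain ⟨δa, hδa, ha⟩ := ssf_after_lt hA hB hx hy hca hxa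
  obtain ⟨δb, hδb, hb⟩ := ssf_before_lt hA hB hx hy hcb hxb
  set ε₁ := min δa (b - a) / 2 with hε₁
  have hε₁0 : 0 < ε₁ := half_pos (lt_min hδa (by linarith))
  have hε₁a : ε₁ ≤ δa := by
    have := min_le_left δa (b - a); linarith
  have hε₁b : a + ε₁ < b := by
    have := min_le_right δa (b - a); linarith
  have hu : x (a + ε₁) < x a := ha ε₁ hε₁0 hε₁a
  set ε₂ := min δb (b - a) / 2 with hε₂
  have hε₂0 : 0 < ε₂ := half_pos (lt_min hδb (by linarith))
  have hε₂b : ε₂ ≤ δb := by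
    have := min_le_left δb (b - a); linarith
  have hε₂a : a < b - ε₂ := by
    have := min_le_right δb (b - a); linarith
  have hv : x (b - ε₂) < x b := hb ε₂ hε₂0 hε₂b
  obtain ⟨c, hcmem, hcmin⟩ := isCompact_Icc.exists_isMinOn (Set.nonempty_Icc.mpr hab.le)
    hxc.continuousOn
  have hc1 : x c ≤ x (a + ε₁) := hcmin ⟨by linarith, by linarith⟩
  have hc2 : x c ≤ x (b - ε₂) := hcmin ⟨by linarith, by linarith⟩
  have hcIoo : c ∈ Set.Ioo a b := by
    rcases hcmem with ⟨h1, h2⟩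
    refine ⟨lt_of_le_of_ne h1 ?_, lt_of_le_of_ne h2 ?_⟩
    · intro h; rw [← h] at hc1; linarith
    · intro h; rw [h] at hc2; linarith
  have hlocal : IsLocalMin x c := hcmin.isLocalMin (Icc_mem_nhds hcIoo.1 hcIoo.2)
  have hcrit : x c * y c + A = 0 := hlocal.hasDerivAt_eq_zero (hx c)
  have hxc0 : x c ≠ 0 := by
    intro h; rw [h] at hcrit; simp at hcrit; linarith
  rcases hxc0.lt_or_gt with hcneg | hcpos
  · -- negative critical point after positive critical point a: contradiction via y
    have hyc : 0 < y c := by nlinarith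
    have hya : y a < 0 := by nlinarith
    have := ssf_yanti hy hB hcIoo.1.le
    linarith
  · -- positive interior minimum: contradiction with after_lt
    obtain ⟨δc, hδc, hc⟩ := ssf_after_lt hA hB hx hy hcrit hcpos
    set ε₃ := min δc (b - c) / 2 with hε₃
    have hbc : 0 < b - c := by have := hcIoo.2; linarith
    have hε₃0 : 0 < ε₃ := half_pos (lt_min hδc hbc)
    have hε₃c : ε₃ ≤ δc := by have := min_le_left δc (b - c); linarith
    have hw : x (c + ε₃) < x c := hc ε₃ hε₃0 hε₃c
    have hwb : c + ε₃ ≤ b := by have := min_le_right δc (b - c); linarith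
    have : x c ≤ x (c + ε₃) := hcmin ⟨by have := hcIoo.1; linarith, hwb⟩
    linarith

lemma ssf_uniq (hA : 0 < A) (hB : 0 ≤ B)
    (hx : ∀ s, HasDerivAt x (x s * y s + A) s)
    (hy : ∀ s, HasDerivAt y (-(x s) ^ 2 - B) s)
    {a b : ℝ} (hca : x a * y a + A = 0) (hcb : x b * y b + A = 0)
    (hxa : 0 < x a) (hxb : 0 < x b) : a = b := by
  rcases lt_trichotomy a b with h | h | h
  · exact absurd (ssf_uniq_aux hA hB hx hy hca hcb hxa hxb h) not_false
  · exact h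
  · exact absurd (ssf_uniq_aux hA hB hx hy hcb hca hxb hxa h) not_false

end Main2
section Main3

variable {A B : ℝ} {x y : ℝ → ℝ}

/-- If `x` vanishes somewhere, it is positive somewhere. -/
lemma ssf_pos_of_zero (hA : 0 < A)
    (hx : ∀ s, HasDerivAt x (x s * y s + A) s)
    {s₀ : ℝ} (h0 : x s₀ = 0) : ∃ s, 0 < x s := by
  have hg : HasDerivAt (fun t => -x t) (-(x s₀ * y s₀ + A)) s₀ := (hx s₀).neg
  have hval : -(x s₀ * y s₀ + A) = -A := by rw [h0]; ring
  rw [hval] at hg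
  obtain ⟨δ, hδ, hneg⟩ := ssf_right_neg hg (by simp [h0]) (by linarith)
  refine ⟨s₀ + δ / 2, ?_⟩
  have := hneg (s₀ + δ / 2) ⟨by linarith, by linarith⟩
  simpa using this

lemma ssf_exists_pos (hA : 0 < A) (hB : 0 ≤ B)
    (hx : ∀ s, HasDerivAt x (x s * y s + A) s)
    (hy : ∀ s, HasDerivAt y (-(x s) ^ 2 - B) s) : ∃ p, 0 < x p := by
  by_contra hcon
  push_neg at hcon
  have hneg : ∀ s, x s < 0 := by
    intro s
    rcases (hcon s).lt_or_eq with h | h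
    · exact h
    · obtain ⟨p, hp⟩ := ssf_pos_of_zero hA hx h
      exact absurd (hcon p) (not_le.mpr hp)
  have hanti := ssf_yanti hy hB
  by_cases hypos : ∀ s, 0 < y s
  · -- y positive everywhere
    set c := y 0 with hcdef
    have hc0 : 0 < c := hypos 0
    have hAc : 0 < A / c := div_pos hA hc0
    have key : ∀ s₀, 0 ≤ s₀ → x s₀ ≤ -(A / c) := by
      intro s₀ hs₀
      by_contra hk
      push_neg at hk
      have hG : ∀ s, HasDerivAt (fun t => (x t + A / c) * Real.exp (-(c * t)))
          ((x s * y s + A) * Real.exp (-(c * s)) + (x s + A / c) * (Real.exp (-(c * s)) * -c)) s := by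
        intro s
        have h1 : HasDerivAt (fun t : ℝ => -(c * t)) (-c) s := by
          simpa using (hasDerivAt_neg s).const_mul c
        exact ((hx s).add_const (A / c)).mul h1.exp
      have hmono : MonotoneOn (fun t => (x t + A / c) * Real.exp (-(c * t))) (Set.Ici s₀) := by
        refine ssf_monoOn hG (convex_Ici _) ?_
        intro s hs
        rw [interior_Ici] at hs
        have hs0 : (0:ℝ) ≤ s := le_trans hs₀ (le_of_lt hs)
        have hys : y s ≤ c := hanti hs0
        have hxs := hneg s
        have hrw : (x s * y s + A) * Real.exp (-(c * s)) + (x s + A / c) * (Real.exp (-(c * s)) * -c)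
            = (x s * (y s - c)) * Real.exp (-(c * s)) := by
          field_simp
          ring
        rw [hrw]
        have expp : (0:ℝ) < Real.exp (-(c * s)) := Real.exp_pos _
        have : 0 ≤ x s * (y s - c) := by nlinarith
        positivity
      set k := x s₀ + A / c with hkdef
      have hk0 : 0 < k := by simp only [hkdef]; linarith
      -- choose a point far to the right
      set T := (A / c / k + 1) / c with hTdef
      have hT0 : 0 < T := by positivity
      set s := s₀ + T with hsdef
      have hss : s₀ ≤ s := by linarith
      have hexp : A / c / k < Real.exp (c * T) := by
        have h1 : c * T = A / c / k + 1 := by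
          rw [hTdef]; field_simp
        rw [h1]
        have := Real.add_one_le_exp (A / c / k + 1)
        linarith
      have hmm := hmono (Set.self_mem_Ici) (Set.mem_Ici.mpr hss) hss
      simp only at hmm
      have hpos : A / c < x s + A / c := by
        have hrw : Real.exp (-(c * s₀)) = Real.exp (c * T) * Real.exp (-(c * s)) := by
          rw [← Real.exp_add]
          congr 1
          rw [hsdef]; ring
        rw [hrw] at hmm
        have expp : (0:ℝ) < Real.exp (-(c * s)) := Real.exp_pos _
        have h2 : A / c < k * Real.exp (c * T) := by
          calc A / c = (A / c / k) * k := by field_simp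
          _ < Real.exp (c * T) * k := by
            exact mul_lt_mul_of_pos_right hexp hk0
          _ = k * Real.exp (c * T) := by ring
        nlinarith
      have : 0 < x s := by linarith
      exact absurd this (not_lt.mpr (hcon s))
    -- now y decreases at definite rate
    set K := (A / c) ^ 2 with hKdef
    have hK0 : 0 < K := by positivity
    have hanti2 : AntitoneOn (fun s => y s + K * s) (Set.Ici 0) := by
      refine ssf_antiOn (fun s => (hy s).add (by simpa using (hasDerivAt_id s).const_mul K))
        (convex_Ici _) ?_
      intro s hs
      rw [interior_Ici] at hs
      have hxs := key s hs.le
      have : (A / c) ^ 2 ≤ (x s) ^ 2 := by nlinarith [sq_nonneg (x s + A / c)]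
      simp only [hKdef]
      nlinarith
    set s := (y 0 + 1) / K with hsdef
    have hs0 : (0:ℝ) ≤ s := by positivity
    have := hanti2 (Set.self_mem_Ici) (Set.mem_Ici.mpr hs0) hs0
    simp only at this
    have hKs : K * s = y 0 + 1 := by rw [hsdef]; field_simp
    have : y s ≤ -1 := by linarith [hKs ▸ this]
    linarith [hypos s]
  · -- y is somewhere nonpositive
    push_neg at hypos
    obtain ⟨t, ht⟩ := hypos
    have hmono : MonotoneOn (fun s => x s - A * s) (Set.Ici t) := by
      refine ssf_monoOn (fun s => (hx s).sub (by simpa using (hasDerivAt_id s).const_mul A))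
        (convex_Ici _) ?_
      intro s hs
      rw [interior_Ici] at hs
      have hys : y s ≤ y t := hanti hs.le
      have : 0 ≤ x s * y s := by nlinarith [hneg s]
      linarith
    set s := t + (1 - x t) / A with hsdef
    have hts : t ≤ s := by
      rw [hsdef]
      have : 0 < (1 - x t) / A := div_pos (by linarith [hneg t]) hA
      linarith
    have := hmono (Set.self_mem_Ici) (Set.mem_Ici.mpr hts) hts
    simp only at this
    have hAs : A * s = A * t + (1 - x t) := by
      rw [hsdef]; field_simp
    have : (1:ℝ) ≤ x s := by rw [hAs] at this; linarith
    linarith [hneg s]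

end Main3
section Main4

variable {A B : ℝ} {x y : ℝ → ℝ}

/-- To the right of any point where `x > 0`, `x` drops below that value somewhere. -/
lemma ssf_claimD (hA : 0 < A) (hB : 0 ≤ B)
    (hx : ∀ s, HasDerivAt x (x s * y s + A) s)
    (hy : ∀ s, HasDerivAt y (-(x s) ^ 2 - B) s)
    {p : ℝ} (hp : 0 < x p) : ∃ q, p < q ∧ x q < x p := by
  by_contra hcon
  push_neg at hcon
  have hge : ∀ s, p ≤ s → x p ≤ x s := by
    intro s hs
    rcases eq_or_lt_of_le hs with h | h
    · rw [← h]
    · exact hcon s h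
  have hanti := ssf_yanti hy hB
  set K := (x p) ^ 2 with hKdef
  have hK0 : 0 < K := by positivity
  -- y decreases at rate at least K on [p, ∞)
  have hanti2 : AntitoneOn (fun s => y s + K * s) (Set.Ici p) := by
    refine ssf_antiOn (fun s => (hy s).add (by simpa using (hasDerivAt_id s).const_mul K))
      (convex_Ici _) ?_
    intro s hs
    rw [interior_Ici] at hs
    have := hge s hs.le
    simp only [hKdef]
    nlinarith
  -- find s₁ with y s₁ very negative
  set s₁ := p + (|y p| + (A + 1) / x p) / K with hs₁def
  have hps₁ : p ≤ s₁ := by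
    rw [hs₁def]
    have : 0 < (|y p| + (A + 1) / x p) / K := by positivity
    linarith
  have hys₁ : y s₁ ≤ -((A + 1) / x p) := by
    have h1 := hanti2 (Set.self_mem_Ici) (Set.mem_Ici.mpr hps₁) hps₁
    simp only at h1
    have h2 : K * s₁ = K * p + (|y p| + (A + 1) / x p) := by
      rw [hs₁def]; field_simp
    rw [h2] at h1
    have := abs_nonneg (y p)
    have := le_abs_self (y p)
    linarith
  have hys₁neg : y s₁ < 0 := by
    have : 0 < (A + 1) / x p := by positivity
    linarith
  -- x decreases at rate at least 1 on [s₁, ∞)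
  have hanti3 : AntitoneOn (fun s => x s + s) (Set.Ici s₁) := by
    refine ssf_antiOn (fun s => (hx s).add (hasDerivAt_id s)) (convex_Ici _) ?_
    intro s hs
    rw [interior_Ici] at hs
    have hxs : x p ≤ x s := hge s (le_trans hps₁ hs.le)
    have hys : y s ≤ y s₁ := hanti hs.le
    have h1 : x s * y s ≤ x p * y s := by nlinarith
    have h2 : x p * y s ≤ x p * y s₁ := by nlinarith
    have h3 : x p * y s₁ ≤ -(A + 1) := by
      have : x p * ((A + 1) / x p) = A + 1 := by field_simp
      nlinarith
    linarith
  -- now get a contradiction far to the right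
  set s₂ := s₁ + x s₁ + |x s₁| + 1 with hs₂def
  have hs₁₂ : s₁ ≤ s₂ := by
    rw [hs₂def]
    have := abs_nonneg (x s₁)
    have := le_abs_self (x s₁)
    have := neg_abs_le (x s₁)
    linarith
  have h4 := hanti3 (Set.self_mem_Ici) (Set.mem_Ici.mpr hs₁₂) hs₁₂
  simp only at h4
  have h5 : x s₂ ≤ -1 := by
    rw [hs₂def] at h4 ⊢
    have := abs_nonneg (x s₁)
    linarith
  have := hge s₂ (le_trans hps₁ hs₁₂)
  linarith

/-- To the left of any point where `x > 0`, `x` drops below that value somewhere. -/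
lemma ssf_claimE (hA : 0 < A) (hB : 0 ≤ B)
    (hx : ∀ s, HasDerivAt x (x s * y s + A) s)
    (hy : ∀ s, HasDerivAt y (-(x s) ^ 2 - B) s)
    {p : ℝ} (hp : 0 < x p) : ∃ o, o < p ∧ x o < x p := by
  by_contra hcon
  push_neg at hcon
  have hge : ∀ s, s ≤ p → x p ≤ x s := by
    intro s hs
    rcases eq_or_lt_of_le hs with h | h
    · rw [h]
    · exact hcon s h
  have hanti := ssf_yanti hy hB
  set K := (x p) ^ 2 with hKdef
  have hK0 : 0 < K := by positivity
  have hanti2 : AntitoneOn (fun s => y s + K * s) (Set.Iic p) := by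
    refine ssf_antiOn (fun s => (hy s).add (by simpa using (hasDerivAt_id s).const_mul K))
      (convex_Iic _) ?_
    intro s hs
    rw [interior_Iic] at hs
    have := hge s hs.le
    simp only [hKdef]
    nlinarith
  -- find s₀ ≤ p with y s₀ ≥ 0
  set s₀ := p - |y p| / K with hs₀def
  have hs₀p : s₀ ≤ p := by
    rw [hs₀def]
    have : 0 ≤ |y p| / K := by positivity
    linarith
  have hys₀ : 0 ≤ y s₀ := by
    have h1 := hanti2 (Set.mem_Iic.mpr hs₀p) (Set.self_mem_Iic) hs₀p
    simp only at h1
    have h2 : K * s₀ = K * p - |y p| := by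
      rw [hs₀def]; field_simp
    rw [h2] at h1
    have := neg_abs_le (y p)
    linarith
  -- x grows at rate at least A on (-∞, s₀]
  have hmono : MonotoneOn (fun s => x s - A * s) (Set.Iic s₀) := by
    refine ssf_monoOn (fun s => (hx s).sub (by simpa using (hasDerivAt_id s).const_mul A))
      (convex_Iic _) ?_
    intro s hs
    rw [interior_Iic] at hs
    have hxs : x p ≤ x s := hge s (le_trans hs.le hs₀p)
    have hys : y s₀ ≤ y s := hanti hs.le
    have : 0 ≤ x s * y s := mul_nonneg (by linarith) (by linarith)
    linarith
  set s₃ := s₀ - (x s₀ + |x s₀| + 1) / A with hs₃def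
  have hs₃₀ : s₃ ≤ s₀ := by
    rw [hs₃def]
    have h1 : 0 ≤ x s₀ + |x s₀| := by
      have := neg_abs_le (x s₀); linarith
    have : 0 ≤ (x s₀ + |x s₀| + 1) / A := by positivity
    linarith
  have h4 := hmono (Set.mem_Iic.mpr hs₃₀) (Set.self_mem_Iic) hs₃₀
  simp only at h4
  have h5 : x s₃ ≤ -1 := by
    have h6 : A * s₃ = A * s₀ - (x s₀ + |x s₀| + 1) := by
      rw [hs₃def]; field_simp
    have := abs_nonneg (x s₀)
    -- h4 : x s₃ - A * s₃ ≤ x s₀ - A * s₀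
    rw [h6] at h4
    linarith
  have := hge s₃ (le_trans hs₃₀ hs₀p)
  linarith

/-- Master lemma: `x` attains a positive global maximum at a unique positive critical point. -/
lemma ssf_master (hA : 0 < A) (hB : 0 ≤ B)
    (hx : ∀ s, HasDerivAt x (x s * y s + A) s)
    (hy : ∀ s, HasDerivAt y (-(x s) ^ 2 - B) s) :
    ∃ m, 0 < x m ∧ (∀ s, x s ≤ x m) ∧
      ∀ c, x c * y c + A = 0 → 0 < x c → c = m := by
  have hxc : Continuous x := continuous_iff_continuousAt.mpr fun s => (hx s).continuousAt
  obtain ⟨p, hp⟩ := ssf_exists_pos hA hB hx hy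
  obtain ⟨q, hpq, hq⟩ := ssf_claimD hA hB hx hy hp
  obtain ⟨o, hop, ho⟩ := ssf_claimE hA hB hx hy hp
  have hoq : o ≤ q := by linarith
  obtain ⟨m, hmmem, hmmax⟩ := isCompact_Icc.exists_isMaxOn (Set.nonempty_Icc.mpr hoq)
    hxc.continuousOn
  have hmp : x p ≤ x m := hmmax ⟨hop.le, hpq.le⟩
  have hm0 : 0 < x m := lt_of_lt_of_le hp hmp
  have hmIoo : m ∈ Set.Ioo o q := by
    rcases hmmem with ⟨h1, h2⟩
    refine ⟨lt_of_le_of_ne h1 ?_, lt_of_le_of_ne h2 ?_⟩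
    · intro h; rw [← h] at hmp; linarith
    · intro h; rw [h] at hmp; linarith
  have hlocal : IsLocalMax x m := hmmax.isLocalMax (Icc_mem_nhds hmIoo.1 hmIoo.2)
  have hcrit : x m * y m + A = 0 := hlocal.hasDerivAt_eq_zero (hx m)
  have huniq : ∀ c, x c * y c + A = 0 → 0 < x c → c = m :=
    fun c hc hc0 => ssf_uniq hA hB hx hy hc hcrit hc0 hm0
  refine ⟨m, hm0, ?_, huniq⟩
  by_contra hcon
  push_neg at hcon
  obtain ⟨t, ht⟩ := hcon
  have ht0 : 0 < x t := lt_trans hm0 ht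
  obtain ⟨q', htq', hq'⟩ := ssf_claimD hA hB hx hy ht0
  obtain ⟨o', ho't, ho'⟩ := ssf_claimE hA hB hx hy ht0
  set lo := min o' m with hlodef
  set hi := max q' m with hhidef
  have hlohi : lo ≤ hi := le_trans (min_le_right _ _) (le_max_right _ _)
  obtain ⟨c, hcmem, hcmax⟩ := isCompact_Icc.exists_isMaxOn (Set.nonempty_Icc.mpr hlohi)
    hxc.continuousOn
  have htmem : t ∈ Set.Icc lo hi :=
    ⟨le_trans (min_le_left _ _) ho't.le, le_trans htq'.le (le_max_left _ _)⟩
  have hct : x t ≤ x c := hcmax htmem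
  have hxlo : x lo < x t := by
    rcases min_cases o' m with ⟨h1, _⟩ | ⟨h1, _⟩ <;> rw [hlodef, h1]
    · exact ho'
    · exact ht
  have hxhi : x hi < x t := by
    rcases max_cases q' m with ⟨h1, _⟩ | ⟨h1, _⟩ <;> rw [hhidef, h1]
    · exact hq'
    · exact ht
  have hcIoo : c ∈ Set.Ioo lo hi := by
    rcases hcmem with ⟨h1, h2⟩
    refine ⟨lt_of_le_of_ne h1 ?_, lt_of_le_of_ne h2 ?_⟩
    · intro h; rw [h] at hxlo; linarith
    · intro h; rw [← h] at hxhi; linarith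
  have hclocal : IsLocalMax x c := hcmax.isLocalMax (Icc_mem_nhds hcIoo.1 hcIoo.2)
  have hccrit : x c * y c + A = 0 := hclocal.hasDerivAt_eq_zero (hx c)
  have : c = m := huniq c hccrit (lt_of_lt_of_le ht0 hct)
  rw [this] at hct
  linarith

end Main4
/-- If `A > 0`, `B ≥ 0` and `(x, y)` solves `x' = xy + A`, `y' = -x² - B`
on `ℝ`, then `x` attains a negative global minimum and a positive global maximum,
and has no other local extrema. -/
theorem stmt_8 (A B : ℝ) (hA : 0 < A) (hB : 0 ≤ B) (x y : ℝ → ℝ)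
    (hx : ∀ s, HasDerivAt x (x s * y s + A) s)
    (hy : ∀ s, HasDerivAt y (-(x s) ^ 2 - B) s) :
    ∃ s₁ s₂ : ℝ, x s₁ < 0 ∧ 0 < x s₂ ∧
      (∀ s, x s₁ ≤ x s) ∧ (∀ s, x s ≤ x s₂) ∧
      (∀ s, IsLocalExtr x s → s = s₁ ∨ s = s₂) := by
  -- the reflected solution
  have hxr : ∀ s, HasDerivAt (fun t => -x (-t)) ((-x (-s)) * (-y (-s)) + A) s := by
    intro s
    have h := ((hx (-s)).comp s (hasDerivAt_neg s)).neg
    have hv : -((x (-s) * y (-s) + A) * (-1)) = (-x (-s)) * (-y (-s)) + A := by ring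
    rw [hv] at h
    exact h
  have hyr : ∀ s, HasDerivAt (fun t => -y (-t)) (-(-x (-s)) ^ 2 - B) s := by
    intro s
    have h := ((hy (-s)).comp s (hasDerivAt_neg s)).neg
    have hv : -((-(x (-s)) ^ 2 - B) * (-1)) = -(-x (-s)) ^ 2 - B := by ring
    rw [hv] at h
    exact h
  obtain ⟨m2, hm2pos, hm2max, hm2uniq⟩ := ssf_master hA hB hx hy
  obtain ⟨m1, hm1pos, hm1max, hm1uniq⟩ := ssf_master hA hB hxr hyr
  refine ⟨-m1, m2, by linarith, hm2pos, ?_, hm2max, ?_⟩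
  · intro s
    have := hm1max (-s)
    simp only [neg_neg] at this
    linarith
  · intro s hs
    have hcrit : x s * y s + A = 0 := hs.hasDerivAt_eq_zero (hx s)
    have hxs0 : x s ≠ 0 := by
      intro h; rw [h] at hcrit; simp at hcrit; linarith
    rcases hxs0.lt_or_gt with h | h
    · left
      have h1 : (-x (-(-s))) * (-y (-(-s))) + A = 0 := by
        simp only [neg_neg]
        linarith [hcrit]
      have h2 : 0 < -x (-(-s)) := by simp only [neg_neg]; linarith
      have := hm1uniq (-s) h1 h2
      linarith
    · right
      exact hm2uniq s hcrit h
end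

section
/- Let A > 0 and B ≥ 0, and let (x, y) solve x'(s) = x(s)y(s) + A, y'(s) = -x(s)^2 - B on ℝ. Then x(s) → 0 as s → +∞ and as s → -∞. -/
open Filter Set

lemma derivLB (f f' : ℝ → ℝ) (hf : ∀ t, HasDerivAt f (f' t) t) {a b m : ℝ}
    (hab : a ≤ b) (h : ∀ t ∈ Set.Icc a b, m ≤ f' t) : f a + m * (b - a) ≤ f b := by
  set g : ℝ → ℝ := fun t => f t - m * t with hgdef
  have hg : ∀ t, HasDerivAt g (f' t - m) t := by
    intro t
    have := (hf t).sub ((hasDerivAt_id t).const_mul m)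
    simp only [mul_one] at this
    exact this
  have hmono : MonotoneOn g (Set.Icc a b) := by
    apply monotoneOn_of_deriv_nonneg (convex_Icc a b)
    · have hfc : Continuous f := continuous_iff_continuousAt.mpr fun t => (hf t).continuousAt
      exact (hfc.sub (continuous_const.mul continuous_id)).continuousOn
    · intro t ht
      exact (hg t).differentiableAt.differentiableWithinAt
    · intro t ht
      rw [(hg t).deriv]
      rw [interior_Icc] at ht
      have := h t ⟨ht.1.le, ht.2.le⟩
      linarith
  have := hmono ⟨le_refl a, hab⟩ ⟨hab, le_refl b⟩ hab
  simp only [hgdef] at this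
  nlinarith

lemma derivUB (f f' : ℝ → ℝ) (hf : ∀ t, HasDerivAt f (f' t) t) {a b m : ℝ}
    (hab : a ≤ b) (h : ∀ t ∈ Set.Icc a b, f' t ≤ m) : f b ≤ f a + m * (b - a) := by
  have := derivLB (fun t => -f t) (fun t => -(f' t)) (fun t => (hf t).neg) (m := -m) hab
    (fun t ht => by have := h t ht; linarith)
  linarith

lemma invariance (f f' : ℝ → ℝ) (hf : ∀ t, HasDerivAt f (f' t) t) {a c : ℝ}
    (hpos : ∀ t, a ≤ t → f t = c → 0 < f' t) (ha : c ≤ f a) :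
    ∀ t, a ≤ t → c ≤ f t := by
  intro t₁ hat₁
  by_contra hlt
  push_neg at hlt
  have hfc : Continuous f := continuous_iff_continuousAt.mpr fun t => (hf t).continuousAt
  set S : Set ℝ := {t ∈ Set.Icc a t₁ | c ≤ f t} with hS
  have hSclosed : IsClosed S := (isClosed_Icc).inter (isClosed_le continuous_const hfc)
  have haS : a ∈ S := ⟨⟨le_refl a, hat₁⟩, ha⟩
  have hSbdd : BddAbove S := BddAbove.mono (fun t ht => ht.1) (bddAbove_Icc)
  set t₀ := sSup S with ht₀
  have ht₀S : t₀ ∈ S := hSclosed.csSup_mem ⟨a, haS⟩ hSbdd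
  have ht₀lt : t₀ < t₁ := lt_of_le_of_ne ht₀S.1.2 (fun h => by rw [h] at ht₀S; linarith [ht₀S.2])
  have hafter : ∀ t, t₀ < t → t ≤ t₁ → f t < c := by
    intro t ht ht1
    by_contra hge
    push_neg at hge
    have : t ∈ S := ⟨⟨le_trans ht₀S.1.1 ht.le, ht1⟩, hge⟩
    exact absurd (le_csSup hSbdd this) (not_le.mpr ht)
  -- f t₀ = c
  have hle : f t₀ ≤ c := by
    have h1 : Tendsto f (nhdsWithin t₀ (Set.Ioi t₀)) (nhds (f t₀)) :=
      (hfc.continuousAt).continuousWithinAt.tendsto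
    refine le_of_tendsto h1 ?_
    filter_upwards [Ioc_mem_nhdsGT_of_mem ⟨le_refl t₀, ht₀lt⟩] with t ht
    exact (hafter t ht.1 ht.2).le
  have heq : f t₀ = c := le_antisymm hle ht₀S.2
  have hd : 0 < f' t₀ := hpos t₀ ht₀S.1.1 heq
  have hslope : Tendsto (slope f t₀) (nhdsWithin t₀ {t₀}ᶜ) (nhds (f' t₀)) :=
    hasDerivAt_iff_tendsto_slope.mp (hf t₀)
  have hslope' : Tendsto (slope f t₀) (nhdsWithin t₀ (Set.Ioi t₀)) (nhds (f' t₀)) :=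
    hslope.mono_left (nhdsWithin_mono _ (fun t ht => ne_of_gt ht))
  have hev : ∀ᶠ t in nhdsWithin t₀ (Set.Ioi t₀), 0 < slope f t₀ t :=
    hslope'.eventually (eventually_gt_nhds hd)
  have hev2 : ∀ᶠ t in nhdsWithin t₀ (Set.Ioi t₀), t ∈ Set.Ioc t₀ t₁ :=
    Ioc_mem_nhdsGT_of_mem ⟨le_refl t₀, ht₀lt⟩
  obtain ⟨t, hst, htmem⟩ := (hev.and hev2).exists
  have hgt : f t > f t₀ := by
    have h1 : slope f t₀ t = (f t - f t₀) / (t - t₀) := by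
      rw [slope_def_field]
    rw [h1] at hst
    have h2 : 0 < t - t₀ := sub_pos.mpr htmem.1
    have h3 := mul_pos hst h2
    rw [div_mul_cancel₀ _ (ne_of_gt h2)] at h3
    linarith
  have := hafter t htmem.1 htmem.2
  linarith [heq]

lemma invarianceUB (f f' : ℝ → ℝ) (hf : ∀ t, HasDerivAt f (f' t) t) {a c : ℝ}
    (hneg : ∀ t, a ≤ t → f t = c → f' t < 0) (ha : f a ≤ c) :
    ∀ t, a ≤ t → f t ≤ c := by
  intro t ht
  have h := invariance (fun s => -f s) (fun s => -(f' s)) (fun s => (hf s).neg) (a := a) (c := -c)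
    (fun u hu heq => by
      have heq' : f u = c := by
        have h2 : -f u = -c := heq
        linarith
      show (0:ℝ) < -(f' u)
      linarith [hneg u hu heq'])
    (show -c ≤ -f a by linarith) t ht
  have h2 : -c ≤ -f t := h
  linarith

lemma key (A B : ℝ) (hA : 0 < A) (hB : 0 ≤ B) (x y : ℝ → ℝ)
    (hx : ∀ s, HasDerivAt x (x s * y s + A) s)
    (hy : ∀ s, HasDerivAt y (-(x s) ^ 2 - B) s) :
    Tendsto x atTop (nhds 0) := by
  have hyant : Antitone y := by
    intro s t hst
    have := derivUB y (fun s => -(x s) ^ 2 - B) hy (m := 0) hst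
      (fun u _ => by show -(x u) ^ 2 - B ≤ (0:ℝ); nlinarith [sq_nonneg (x u)])
    linarith
  -- Step 1 : y is eventually below any level
  have ybb : ∀ M : ℝ, ∃ s, ∀ t, s ≤ t → y t ≤ M := by
    intro M
    by_contra h
    push_neg at h
    have hMlt : ∀ s, M < y s := by
      intro s
      obtain ⟨t, hst, hMt⟩ := h s
      exact lt_of_lt_of_le hMt (hyant hst)
    obtain ⟨C, hCdef⟩ : ∃ c : ℝ, c = |y 0| + |M| + 1 := ⟨_, rfl⟩
    have hC : 0 < C := by rw [hCdef]; positivity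
    have hyb : ∀ s, 0 ≤ s → |y s| ≤ C := by
      intro s hs
      rw [abs_le]
      constructor
      · rw [hCdef]
        have h1 := hMlt s
        have h2 := neg_abs_le M
        have h3 := abs_nonneg (y 0)
        linarith
      · rw [hCdef]
        have h1 : y s ≤ y 0 := hyant hs
        have h2 := le_abs_self (y 0)
        have h3 := abs_nonneg M
        linarith
    obtain ⟨ε, hεdef⟩ : ∃ e : ℝ, e = A / (2 * C) := ⟨_, rfl⟩
    have hε : 0 < ε := by rw [hεdef]; positivity
    have hεC : ε * C = A / 2 := by
      rw [hεdef]; field_simp; try ring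
    have hband : ∀ t, 0 ≤ t → |x t| ≤ ε → A / 2 ≤ x t * y t + A := by
      intro t ht hxt
      have h1 : |x t * y t| ≤ ε * C := by
        rw [abs_mul]
        exact mul_le_mul hxt (hyb t ht) (abs_nonneg _) hε.le
      have h2 := neg_abs_le (x t * y t)
      linarith
    -- (a) x enters the band
    have ha : ∃ s₁, 0 ≤ s₁ ∧ |x s₁| ≤ ε := by
      by_contra h'
      push_neg at h'
      obtain ⟨T, hTdef⟩ : ∃ T : ℝ, T = (y 0 - M + 1) / ε ^ 2 := ⟨_, rfl⟩
      have hy0 : M < y 0 := hMlt 0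
      have hT : (0:ℝ) ≤ T := by
        rw [hTdef]; apply div_nonneg (by linarith) (by positivity)
      have h2 := derivUB y (fun s => -(x s) ^ 2 - B) hy (m := -ε ^ 2) hT (fun u hu => by
        have h3 := h' u hu.1
        have h4 : ε ^ 2 ≤ (x u) ^ 2 := by
          have := pow_le_pow_left₀ hε.le h3.le 2
          simpa [sq_abs] using this
        show -(x u) ^ 2 - B ≤ -ε ^ 2
        linarith)
      have h5 : ε ^ 2 * T = y 0 - M + 1 := by
        rw [hTdef]; field_simp; try ring
      nlinarith [hMlt T]
    obtain ⟨s₁, hs₁0, hs₁⟩ := ha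
    -- (b) x stays above -ε
    have hb : ∀ t, s₁ ≤ t → -ε ≤ x t := by
      apply invariance x (fun s => x s * y s + A) hx
      · intro t ht heq
        have h0t : 0 ≤ t := le_trans hs₁0 ht
        have habs : |x t| ≤ ε := by
          rw [heq, abs_neg, abs_of_pos hε]
        show 0 < x t * y t + A
        linarith [hband t h0t habs]
      · exact (abs_le.mp hs₁).1
    -- (c) x reaches ε
    have hc : ∃ s₂, s₁ ≤ s₂ ∧ ε ≤ x s₂ := by
      by_contra h'
      push_neg at h'
      obtain ⟨T, hTdef⟩ : ∃ T : ℝ, T = s₁ + 6 * ε / A := ⟨_, rfl⟩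
      have hT : s₁ ≤ T := by
        rw [hTdef]
        have : 0 ≤ 6 * ε / A := by positivity
        linarith
      have h2 := derivLB x (fun s => x s * y s + A) hx (m := A / 2) hT (fun u hu =>
        hband u (le_trans hs₁0 hu.1) (abs_le.mpr ⟨hb u hu.1, (h' u hu.1).le⟩))
      have h3 : A / 2 * (T - s₁) = 3 * ε := by
        rw [hTdef]; field_simp; try ring
      have h4 := h' T hT
      linarith [(abs_le.mp hs₁).1]
    obtain ⟨s₂, hs₁₂, hs₂⟩ := hc
    -- (d) x stays above ε
    have hd : ∀ t, s₂ ≤ t → ε ≤ x t := by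
      apply invariance x (fun s => x s * y s + A) hx
      · intro t ht heq
        have h0t : 0 ≤ t := le_trans hs₁0 (le_trans hs₁₂ ht)
        have habs : |x t| ≤ ε := by rw [heq, abs_of_pos hε]
        show 0 < x t * y t + A
        linarith [hband t h0t habs]
      · exact hs₂
    -- (e) then y → -∞, contradiction
    obtain ⟨T, hTdef⟩ : ∃ T : ℝ, T = s₂ + (y s₂ - M + 1) / ε ^ 2 := ⟨_, rfl⟩
    have hys₂ : M < y s₂ := hMlt s₂
    have hT : s₂ ≤ T := by
      rw [hTdef]
      have : 0 ≤ (y s₂ - M + 1) / ε ^ 2 := by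
        apply div_nonneg (by linarith) (by positivity)
      linarith
    have h2 := derivUB y (fun s => -(x s) ^ 2 - B) hy (m := -ε ^ 2) hT (fun u hu => by
      have := hd u hu.1
      show -(x u) ^ 2 - B ≤ -ε ^ 2
      nlinarith)
    have h5 : ε ^ 2 * (T - s₂) = y s₂ - M + 1 := by
      rw [hTdef]; field_simp; try ring
    nlinarith [hMlt T]
  -- Step 2 : x is eventually nonnegative
  obtain ⟨sy, hsy⟩ := ybb 0
  have hstep2 : ∃ s₀, sy ≤ s₀ ∧ 0 ≤ x s₀ := by
    by_contra h'
    push_neg at h'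
    obtain ⟨T, hTdef⟩ : ∃ T : ℝ, T = sy + (|x sy| + 1) / A := ⟨_, rfl⟩
    have hT : sy ≤ T := by
      rw [hTdef]
      have : 0 ≤ (|x sy| + 1) / A := by positivity
      linarith
    have h2 := derivLB x (fun s => x s * y s + A) hx (m := A) hT (fun u hu => by
      have h3 := h' u hu.1
      have h4 := hsy u hu.1
      show A ≤ x u * y u + A
      nlinarith)
    have h5 : A * (T - sy) = |x sy| + 1 := by
      rw [hTdef]; field_simp; try ring
    have h6 := h' T hT
    linarith [neg_abs_le (x sy)]
  obtain ⟨s₀, hsys₀, hx₀⟩ := hstep2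
  have hnn : ∀ t, s₀ ≤ t → 0 ≤ x t := by
    apply invariance x (fun s => x s * y s + A) hx
    · intro t _ heq
      show 0 < x t * y t + A
      rw [heq]
      simpa using hA
    · exact hx₀
  -- Step 3 : conclusion
  rw [Metric.tendsto_atTop]
  intro ε hε
  obtain ⟨δ, hδdef⟩ : ∃ d : ℝ, d = ε / 2 := ⟨_, rfl⟩
  have hδ : 0 < δ := by rw [hδdef]; positivity
  obtain ⟨M, hMdef⟩ : ∃ m : ℝ, m = 2 * A / δ := ⟨_, rfl⟩
  have hM : 0 < M := by rw [hMdef]; positivity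
  have hδM : δ * M = 2 * A := by
    rw [hMdef]; field_simp
  obtain ⟨sM', hsM'⟩ := ybb (-M)
  obtain ⟨sM, hsMdef⟩ : ∃ s : ℝ, s = max s₀ sM' := ⟨_, rfl⟩
  have hyM : ∀ t, sM ≤ t → y t ≤ -M := fun t ht =>
    hsM' t (le_trans (le_trans (le_max_right _ _) hsMdef.ge) ht)
  have hxnn : ∀ t, sM ≤ t → 0 ≤ x t := fun t ht =>
    hnn t (le_trans (le_trans (le_max_left _ _) hsMdef.ge) ht)
  have hstep3a : ∃ s₃, sM ≤ s₃ ∧ x s₃ ≤ δ := by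
    by_contra h'
    push_neg at h'
    obtain ⟨T, hTdef⟩ : ∃ T : ℝ, T = sM + (x sM + 1) / A := ⟨_, rfl⟩
    have hxsM : δ < x sM := h' sM (le_refl _)
    have hT : sM ≤ T := by
      rw [hTdef]
      have : 0 ≤ (x sM + 1) / A := by
        apply div_nonneg (by linarith) hA.le
      linarith
    have h2 := derivUB x (fun s => x s * y s + A) hx (m := -A) hT (fun u hu => by
      have h1 := h' u hu.1
      have h3 := hyM u hu.1
      show x u * y u + A ≤ -A
      nlinarith [mul_le_mul_of_nonneg_right h1.le hM.le,
        mul_le_mul_of_nonneg_left h3 (le_trans hδ.le h1.le)])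
    have h5 : A * (T - sM) = x sM + 1 := by
      rw [hTdef]; field_simp; try ring
    have h6 := h' T hT
    linarith
  obtain ⟨s₃, hs₃, hxs₃⟩ := hstep3a
  have hub : ∀ t, s₃ ≤ t → x t ≤ δ := by
    apply invarianceUB x (fun s => x s * y s + A) hx
    · intro t ht heq
      have h3 := hyM t (le_trans hs₃ ht)
      show x t * y t + A < 0
      rw [heq]
      nlinarith [mul_le_mul_of_nonneg_left h3 hδ.le]
    · exact hxs₃
  refine ⟨s₃, fun s hs => ?_⟩
  have h1 := hxnn s (le_trans hs₃ hs)
  have h2 := hub s hs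
  rw [Real.dist_eq, sub_zero, abs_of_nonneg h1]
  rw [hδdef] at h2
  linarith

/-- If `A > 0`, `B ≥ 0` and `(x, y)` solves `x' = xy + A`, `y' = -x² - B`
on `ℝ`, then `x(s) → 0` as `s → ±∞`. -/
theorem stmt_9 (A B : ℝ) (hA : 0 < A) (hB : 0 ≤ B) (x y : ℝ → ℝ)
    (hx : ∀ s, HasDerivAt x (x s * y s + A) s)
    (hy : ∀ s, HasDerivAt y (-(x s) ^ 2 - B) s) :
    Tendsto x atTop (nhds 0) ∧ Tendsto x atBot (nhds 0) := by
  refine ⟨key A B hA hB x y hx hy, ?_⟩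
  have hx' : ∀ s, HasDerivAt (fun s => -x (-s)) ((fun s => -x (-s)) s * (fun s => -y (-s)) s + A) s := by
    intro s
    have h1 : HasDerivAt (fun s : ℝ => x (-s)) ((x (-s) * y (-s) + A) * (-1)) s :=
      (hx (-s)).comp s (hasDerivAt_neg s)
    have h2 : HasDerivAt (fun s : ℝ => -x (-s)) (-((x (-s) * y (-s) + A) * (-1))) s := h1.neg
    convert h2 using 1
    simp only
    ring
  have hy' : ∀ s, HasDerivAt (fun s => -y (-s)) (-((fun s => -x (-s)) s) ^ 2 - B) s := by
    intro s
    have h1 : HasDerivAt (fun s : ℝ => y (-s)) ((-(x (-s)) ^ 2 - B) * (-1)) s :=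
      (hy (-s)).comp s (hasDerivAt_neg s)
    have h2 : HasDerivAt (fun s : ℝ => -y (-s)) (-((-(x (-s)) ^ 2 - B) * (-1))) s := h1.neg
    convert h2 using 1
    simp only
    ring
  have h2 := key A B hA hB (fun s => -x (-s)) (fun s => -y (-s)) hx' hy'
  have h3 : Tendsto (fun s => x (-s)) atTop (nhds 0) := by
    have := h2.neg
    simpa using this
  have h4 := h3.comp tendsto_neg_atBot_atTop
  have h5 : ((fun s => x (-s)) ∘ Neg.neg : ℝ → ℝ) = x := by
    funext s; simp [Function.comp]
  rwa [h5] at h4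
end

section
/- Let A > 0 and B ≥ 0, and let (x, y) solve x'(s) = x(s)y(s) + A, y'(s) = -x(s)^2 - B on ℝ. Define θ(s) = ∫₀^s x(s') ds'. Then θ(s) → +∞ as s → +∞ and also θ(s) → +∞ as s → -∞; equivalently, ∫₀^∞ x ds = +∞ and ∫_{-∞}^0 x ds = -∞. -/
open Filter Set Topology intervalIntegral

/-- Comparison: if `f' ≥ m` on `[a,b]` then `f a + m (b-a) ≤ f b`. -/
lemma my_deriv_ge {f f' : ℝ → ℝ} {a b m : ℝ}
    (hf : ∀ s, a ≤ s → HasDerivAt f (f' s) s)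
    (hab : a ≤ b) (h : ∀ s, a ≤ s → s ≤ b → m ≤ f' s) :
    f a + m * (b - a) ≤ f b := by
  have H : MonotoneOn (fun s => f s - m * s) (Icc a b) := by
    have hd : ∀ s ∈ Icc a b, HasDerivAt (fun s => f s - m * s) (f' s - m) s := by
      intro s hs
      exact ((hf s hs.1).sub ((hasDerivAt_id s).const_mul m)).congr_deriv (by ring)
    apply monotoneOn_of_deriv_nonneg (convex_Icc a b)
    · exact fun s hs => (hd s hs).continuousAt.continuousWithinAt
    · intro s hs
      rw [interior_Icc] at hs
      exact (hd s ⟨hs.1.le, hs.2.le⟩).differentiableAt.differentiableWithinAt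
    · intro s hs
      rw [interior_Icc] at hs
      rw [(hd s ⟨hs.1.le, hs.2.le⟩).deriv]
      have := h s hs.1.le hs.2.le
      linarith
  have := H (left_mem_Icc.2 hab) (right_mem_Icc.2 hab) hab
  simp only at this
  nlinarith

/-- Comparison: if `f' ≤ m` on `[a,b]` then `f b ≤ f a + m (b-a)`. -/
lemma my_deriv_le {f f' : ℝ → ℝ} {a b m : ℝ}
    (hf : ∀ s, a ≤ s → HasDerivAt f (f' s) s)
    (hab : a ≤ b) (h : ∀ s, a ≤ s → s ≤ b → f' s ≤ m) :
    f b ≤ f a + m * (b - a) := by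
  have := my_deriv_ge (f := fun s => -f s) (f' := fun s => -f' s) (m := -m)
    (fun s hs => (hf s hs).neg) hab
    (fun s h1 h2 => by show -m ≤ -f' s; have := h s h1 h2; linarith)
  nlinarith

/-- Barrier lemma: if `f a > 0` and `f' > 0` whenever `f = 0` (after `a`), then `f > 0` after `a`. -/
lemma my_barrier {f f' : ℝ → ℝ} {a : ℝ}
    (hf : ∀ s, a ≤ s → HasDerivAt f (f' s) s)
    (h0 : 0 < f a) (h : ∀ s, a ≤ s → f s = 0 → 0 < f' s) :
    ∀ s, a ≤ s → 0 < f s := by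
  intro b hb
  by_contra hfb
  push_neg at hfb
  have hcont : ContinuousOn f (Icc a b) :=
    fun s hs => (hf s hs.1).continuousAt.continuousWithinAt
  set S : Set ℝ := Icc a b ∩ f ⁻¹' (Iic 0) with hS
  have hSne : S.Nonempty := ⟨b, ⟨⟨hb, le_refl b⟩, hfb⟩⟩
  have hSclosed : IsClosed S :=
    hcont.preimage_isClosed_of_isClosed isClosed_Icc isClosed_Iic
  have hSbdd : BddBelow S := ⟨a, fun s hs => hs.1.1⟩
  set t := sInf S with ht
  have htS : t ∈ S := hSclosed.csInf_mem hSne hSbdd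
  have hta : a ≤ t := htS.1.1
  have hta' : a < t := by
    rcases eq_or_lt_of_le hta with heq | hlt
    · exfalso; rw [← heq] at htS; exact absurd htS.2 (by simpa using h0.not_ge)
    · exact hlt
  have hpos_lt : ∀ s, a ≤ s → s < t → 0 < f s := by
    intro s hsa hst
    by_contra hs
    push_neg at hs
    have : s ∈ S := ⟨⟨hsa, hst.le.trans htS.1.2⟩, hs⟩
    exact absurd (csInf_le hSbdd this) (not_le.2 hst)
  -- f t = 0
  have hft : f t = 0 := by
    have hle : f t ≤ 0 := htS.2
    have hge : 0 ≤ f t := by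
      have hc : ContinuousAt f t := (hf t hta).continuousAt
      have hne : (𝓝[<] t).NeBot := nhdsLT_neBot t
      have htend : Tendsto f (𝓝[<] t) (𝓝 (f t)) := hc.mono_left nhdsWithin_le_nhds
      refine ge_of_tendsto htend ?_
      filter_upwards [Ioo_mem_nhdsLT_of_mem (⟨hta', le_refl t⟩ : t ∈ Ioc a t)] with s hs
      exact (hpos_lt s hs.1.le hs.2).le
    linarith
  -- derivative positive at t, get contradiction to the left
  have hd := h t hta hft
  have hslope := (hasDerivAt_iff_tendsto_slope.1 (hf t hta))
  have hev : ∀ᶠ s in 𝓝[<] t, 0 < slope f t s := by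
    have h1 : 𝓝[<] t ≤ 𝓝[≠] t := nhdsWithin_mono t (fun s hs => ne_of_lt hs)
    exact (hslope.mono_left h1).eventually (eventually_gt_nhds hd)
  have hev2 : ∀ᶠ s in 𝓝[<] t, s ∈ Ioo a t :=
    Ioo_mem_nhdsLT_of_mem ⟨hta', le_refl t⟩
  obtain ⟨s, hs1, hs2⟩ := (hev.and hev2).exists
  have : f s < 0 := by
    have hst : s - t < 0 := by have := hs2.2; linarith
    have : slope f t s = (f s - f t) / (s - t) := by
      rw [slope_def_field]
    rw [this, hft, sub_zero] at hs1
    rcases lt_trichotomy (f s) 0 with h | h | h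
    · exact h
    · simp [h] at hs1
    · exfalso; have := div_neg_of_pos_of_neg h hst; linarith
  exact absurd this (not_lt.2 (hpos_lt s hs2.1.le hs2.2).le)

set_option maxHeartbeats 1000000 in
lemma my_main (A B : ℝ) (hA : 0 < A) (hB : 0 ≤ B) (x y : ℝ → ℝ)
    (hx : ∀ s, HasDerivAt x (x s * y s + A) s)
    (hy : ∀ s, HasDerivAt y (-(x s) ^ 2 - B) s) :
    Tendsto (fun s => ∫ t in (0:ℝ)..s, x t) atTop atTop := by
  have hxc : Continuous x :=
    continuous_iff_continuousAt.2 fun s => (hx s).differentiableAt.continuousAt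
  have hyc : Continuous y :=
    continuous_iff_continuousAt.2 fun s => (hy s).differentiableAt.continuousAt
  have hy'c : Continuous (fun s => -(x s) ^ 2 - B) := by continuity
  have hsqc : Continuous (fun s => (x s) ^ 2 + B) := by continuity
  have hsqc' : Continuous (fun s => (x s) ^ 2) := by continuity
  have hyanti : Antitone y := by
    apply antitone_of_deriv_nonpos (fun s => (hy s).differentiableAt)
    intro s
    rw [(hy s).deriv]
    nlinarith [sq_nonneg (x s)]
  have FTCy : ∀ a b : ℝ, y a - y b = ∫ t in a..b, ((x t) ^ 2 + B) := by
    intro a b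
    have h1 : ∫ t in a..b, (-(x t) ^ 2 - B) = y b - y a :=
      integral_eq_sub_of_hasDerivAt (fun t _ => hy t) (hy'c.intervalIntegrable a b)
    have heq : (fun t => -(x t) ^ 2 - B) = (fun t => -((x t) ^ 2 + B)) := by
      funext t; ring
    rw [heq, integral_neg] at h1
    linarith
  -- Step Q : y is eventually nonpositive
  have hQ : ∃ s₁ : ℝ, y s₁ ≤ 0 := by
    by_contra hq
    push_neg at hq
    have hy00 : 0 < y 0 := hq 0
    have hIx2 : ∀ s, 0 ≤ s → ∫ t in (0:ℝ)..s, (x t) ^ 2 ≤ y 0 := by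
      intro s hs
      have h1 : ∫ t in (0:ℝ)..s, (x t) ^ 2 ≤ ∫ t in (0:ℝ)..s, ((x t) ^ 2 + B) := by
        apply integral_mono_on hs (hsqc'.intervalIntegrable 0 s) (hsqc.intervalIntegrable 0 s)
        intro t _; nlinarith
      have h2 := FTCy 0 s
      have h3 := (hq s).le
      linarith
    by_cases hxp : ∃ s₀, 0 < x s₀
    · obtain ⟨s₀, hx₀⟩ := hxp
      have hbar : ∀ s, s₀ ≤ s → 0 < x s := by
        apply my_barrier (fun s _ => hx s) hx₀
        intro s _ hxs; rw [hxs]; simpa using hA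
      set u := max s₀ 0 with hu
      have hus₀ : s₀ ≤ u := le_max_left _ _
      have hu0 : (0:ℝ) ≤ u := le_max_right _ _
      have hxu : ∀ t, u ≤ t → A * (t - u) ≤ x t := by
        intro t ht
        have h1 : x u + A * (t - u) ≤ x t := by
          apply my_deriv_ge (fun s _ => hx s) ht
          intro s h1 h2
          have hxs := hbar s (le_trans hus₀ h1)
          have hys := hq s
          nlinarith
        have := hbar u hus₀
        linarith
      set s4 := u + 1 / A with hs4
      have hs4u : u ≤ s4 := le_add_of_nonneg_right (by positivity)
      have hx1 : ∀ t, s4 ≤ t → 1 ≤ x t := by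
        intro t ht
        have h1 := hxu t (le_trans hs4u ht)
        have h2 : A * (1 / A) ≤ A * (t - u) := by
          apply mul_le_mul_of_nonneg_left _ hA.le
          rw [hs4] at ht; linarith
        have h3 : A * (1 / A) = 1 := by field_simp
        linarith
      set b := s4 + (y 0 + 1) with hb'
      have hs4b : s4 ≤ b := by linarith
      have h1 : (y 0 + 1) ≤ ∫ t in s4..b, (x t) ^ 2 := by
        have h2 : ∫ t in s4..b, (1:ℝ) ≤ ∫ t in s4..b, (x t) ^ 2 := by
          apply integral_mono_on hs4b intervalIntegrable_const
            (hsqc'.intervalIntegrable s4 b)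
          intro t ht
          have := hx1 t ht.1
          nlinarith
        rw [integral_const, smul_eq_mul, mul_one] at h2
        rw [hb'] at h2 ⊢
        linarith
      have h2 : 0 ≤ ∫ t in (0:ℝ)..s4, (x t) ^ 2 := by
        apply integral_nonneg (by linarith)
        intro t _; positivity
      have h3 : (∫ t in (0:ℝ)..s4, (x t) ^ 2) + ∫ t in s4..b, (x t) ^ 2
          = ∫ t in (0:ℝ)..b, (x t) ^ 2 :=
        integral_add_adjacent_intervals (μ := MeasureTheory.volume) (hsqc'.intervalIntegrable 0 s4)
          (hsqc'.intervalIntegrable s4 b)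
      have h4 := hIx2 b (by linarith)
      linarith
    · push_neg at hxp
      set c := A / (2 * y 0) with hc
      have hcpos : 0 < c := by positivity
      have hcy : c * y 0 = A / 2 := by
        rw [hc]; field_simp
      by_cases hxc2 : ∃ s₀, 0 ≤ s₀ ∧ -c < x s₀
      · obtain ⟨s₀, hs₀0, hs₀⟩ := hxc2
        have hbar : ∀ s, s₀ ≤ s → 0 < x s + c := by
          apply my_barrier (f := fun s => x s + c) (f' := fun s => x s * y s + A)
            (fun s _ => (hx s).add_const c) (by show 0 < x s₀ + c; linarith)
          intro s hss hfs
          have hxs : x s = -c := by linarith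
          have h1 : y s ≤ y 0 := hyanti (le_trans hs₀0 hss)
          have h2 : 0 < y s := hq s
          have h3 : x s * y s ≥ -c * y 0 := by rw [hxs]; nlinarith
          nlinarith
        have hgrow : ∀ t, s₀ ≤ t → x s₀ + (A / 2) * (t - s₀) ≤ x t := by
          intro t ht
          apply my_deriv_ge (fun s _ => hx s) ht
          intro s h1 _
          have ha1 : -c < x s := by have := hbar s h1; linarith
          have ha2 : x s ≤ 0 := hxp s
          have ha3 : 0 < y s := hq s
          have ha4 : y s ≤ y 0 := hyanti (le_trans hs₀0 h1)
          nlinarith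
        set t := s₀ + (2 * (c + 1)) / A with ht'
        have hts0 : s₀ ≤ t := by
          rw [ht']
          have : 0 < 2 * (c + 1) / A := by positivity
          linarith
        have h1 := hgrow t hts0
        have hts : A / 2 * (t - s₀) = c + 1 := by
          rw [ht']; field_simp; ring
        have h2 := hxp t
        linarith
      · push_neg at hxc2
        set s := y 0 / c ^ 2 + 1 with hs'
        have hs0 : 0 ≤ s := by positivity
        have h1 : c ^ 2 * s ≤ ∫ t in (0:ℝ)..s, (x t) ^ 2 := by
          have h2 : ∫ t in (0:ℝ)..s, (c ^ 2 : ℝ) ≤ ∫ t in (0:ℝ)..s, (x t) ^ 2 := by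
            apply integral_mono_on hs0 intervalIntegrable_const
              (hsqc'.intervalIntegrable 0 s)
            intro t ht
            have := hxc2 t ht.1
            nlinarith
          rw [integral_const, smul_eq_mul, sub_zero] at h2
          linarith [h2]
        have h2 := hIx2 s hs0
        have h3 : c ^ 2 * (y 0 / c ^ 2) = y 0 := by field_simp
        have h4 : (0:ℝ) < c ^ 2 := by positivity
        have h5 : c ^ 2 * s = y 0 + c ^ 2 := by rw [hs', mul_add, h3, mul_one]
        linarith
  obtain ⟨s₁, hs₁⟩ := hQ
  have hy0 : ∀ s, s₁ ≤ s → y s ≤ 0 := fun s hs => le_trans (hyanti hs) hs₁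
  have hx0 : ∃ s₀, s₁ ≤ s₀ ∧ 0 < x s₀ := by
    by_contra h
    push_neg at h
    set b := s₁ + (1 - x s₁) / A with hb'
    have hxs₁ : x s₁ ≤ 0 := h s₁ le_rfl
    have hpos : 0 < (1 - x s₁) / A := div_pos (by linarith) hA
    have hs₁b : s₁ ≤ b := by rw [hb']; linarith
    have h1 : x s₁ + A * (b - s₁) ≤ x b := by
      apply my_deriv_ge (fun s _ => hx s) hs₁b
      intro s hsa _
      have h2 := h s hsa
      have h3 := hy0 s hsa
      nlinarith
    have h2 : A * (b - s₁) = 1 - x s₁ := by rw [hb']; field_simp; ring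
    have h3 := h b hs₁b
    linarith
  obtain ⟨s₀, hs₀1, hs₀⟩ := hx0
  have hbar : ∀ s, s₀ ≤ s → 0 < x s := by
    apply my_barrier (fun s _ => hx s) hs₀
    intro s _ hxs; rw [hxs]; simpa using hA
  set s₂ := max s₀ 0 with hs₂'
  clear_value s₂
  have hs₂0 : (0:ℝ) ≤ s₂ := hs₂' ▸ le_max_right _ _
  have hs₂s₀ : s₀ ≤ s₂ := hs₂' ▸ le_max_left _ _
  have hxpos : ∀ s, s₂ ≤ s → 0 < x s := fun s hs => hbar s (le_trans hs₂s₀ hs)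
  have hy2 : ∀ s, s₂ ≤ s → y s ≤ 0 :=
    fun s hs => hy0 s (le_trans (le_trans hs₀1 hs₂s₀) hs)
  -- main contradiction
  rw [tendsto_atTop_atTop]
  by_contra hcon
  push_neg at hcon
  obtain ⟨M, hM⟩ := hcon
  have hθd : ∀ a b : ℝ, (∫ t in (0:ℝ)..b, x t) - (∫ t in (0:ℝ)..a, x t) = ∫ t in a..b, x t := by
    intro a b
    rw [← integral_add_adjacent_intervals (μ := MeasureTheory.volume)
      (hxc.intervalIntegrable 0 a) (hxc.intervalIntegrable a b)]
    ring
  have hMs : ∀ s, s₂ ≤ s → (∫ t in (0:ℝ)..s, x t) < M := by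
    intro s hs
    obtain ⟨a, ha, haM⟩ := hM s
    have h1 : 0 ≤ ∫ t in s..a, x t :=
      integral_nonneg ha (fun u hu => (hxpos u (le_trans hs hu.1)).le)
    have h2 := hθd s a
    linarith
  set M₁ := M - ∫ t in (0:ℝ)..s₂, x t with hM₁'
  clear_value M₁
  have hI : ∀ b, s₂ ≤ b → ∫ t in s₂..b, x t ≤ M₁ := by
    intro b hb
    have h1 := hMs b hb
    have h2 := hθd s₂ b
    rw [hM₁']; linarith
  have hM₁0 : 0 ≤ M₁ := by
    have h1 := hI s₂ le_rfl
    simpa using h1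
  have hxd_le : ∀ t s, s₂ ≤ t → t ≤ s → x s ≤ x t + A * (s - t) := by
    intro t s h1 h2
    apply my_deriv_le (fun u _ => hx u) h2
    intro u hu1 _
    have h3 := hxpos u (le_trans h1 hu1)
    have h4 := hy2 u (le_trans h1 hu1)
    nlinarith
  set K := max (2 * x s₂) (2 * Real.sqrt (A * M₁)) with hK'
  clear_value K
  have hKx : ∀ s, s₂ ≤ s → x s ≤ K := by
    intro s hs
    by_cases hcase : x s / (2 * A) ≤ s - s₂
    · set δ := x s / (2 * A) with hδ'
      have hxspos := hxpos s hs
      have hδpos : 0 < δ := by positivity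
      have hδs : s₂ ≤ s - δ := by linarith
      have hlow : ∀ t ∈ Icc (s - δ) s, x s / 2 ≤ x t := by
        intro t ht
        have h1 := hxd_le t s (le_trans hδs ht.1) ht.2
        have h2 : A * (s - t) ≤ A * δ :=
          mul_le_mul_of_nonneg_left (by linarith [ht.1]) hA.le
        have h3 : A * δ = x s / 2 := by rw [hδ']; field_simp
        linarith
      have h1 : δ * (x s / 2) ≤ ∫ t in (s - δ)..s, x t := by
        have h2 : ∫ t in (s - δ)..s, (x s / 2 : ℝ) ≤ ∫ t in (s - δ)..s, x t :=
          integral_mono_on (by linarith) intervalIntegrable_const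
            (hxc.intervalIntegrable _ _) hlow
        rw [integral_const, smul_eq_mul] at h2
        have h3 : s - (s - δ) = δ := by ring
        rw [h3] at h2
        linarith
      have h2 : 0 ≤ ∫ t in s₂..(s - δ), x t :=
        integral_nonneg hδs (fun u hu => (hxpos u hu.1).le)
      have h3 : (∫ t in s₂..(s - δ), x t) + ∫ t in (s - δ)..s, x t = ∫ t in s₂..s, x t :=
        integral_add_adjacent_intervals (μ := MeasureTheory.volume)
          (hxc.intervalIntegrable _ _) (hxc.intervalIntegrable _ _)
      have h4 := hI s hs
      have h5 : δ * (x s / 2) ≤ M₁ := by linarith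
      have h6 : (x s / 2) ^ 2 ≤ A * M₁ := by
        have h7 : δ * (x s / 2) = (x s / 2) ^ 2 / A := by rw [hδ']; field_simp
        rw [h7] at h5
        calc (x s / 2) ^ 2 = ((x s / 2) ^ 2 / A) * A := by field_simp
        _ ≤ M₁ * A := mul_le_mul_of_nonneg_right h5 hA.le
        _ = A * M₁ := mul_comm _ _
      have h7 : x s / 2 ≤ Real.sqrt (A * M₁) := by
        rw [← Real.sqrt_sq (by positivity : (0:ℝ) ≤ x s / 2)]
        exact Real.sqrt_le_sqrt h6
      calc x s = 2 * (x s / 2) := by ring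
      _ ≤ 2 * Real.sqrt (A * M₁) := by linarith
      _ ≤ K := hK' ▸ le_max_right _ _
    · push_neg at hcase
      have h1 := hxd_le s₂ s le_rfl hs
      have h2 : A * (s - s₂) ≤ x s / 2 := by
        have h3 : A * (s - s₂) < A * (x s / (2 * A)) := mul_lt_mul_of_pos_left hcase hA
        have h4 : A * (x s / (2 * A)) = x s / 2 := by field_simp
        linarith
      have h5 : x s ≤ 2 * x s₂ := by linarith
      exact le_trans h5 (hK' ▸ le_max_left (2 * x s₂) (2 * Real.sqrt (A * M₁)))
  have hK0 : 0 < K :=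
    lt_of_lt_of_le (by linarith [hxpos s₂ le_rfl] : (0:ℝ) < 2 * x s₂) (hK' ▸ le_max_left (2 * x s₂) (2 * Real.sqrt (A * M₁)))
  have hIx2' : ∀ b, s₂ ≤ b → ∫ t in s₂..b, (x t) ^ 2 ≤ K * M₁ := by
    intro b hb
    have h1 : ∫ t in s₂..b, (x t) ^ 2 ≤ ∫ t in s₂..b, K * x t := by
      apply integral_mono_on hb (hsqc'.intervalIntegrable _ _)
        ((continuous_const.mul hxc).intervalIntegrable _ _)
      intro t ht
      have h2 := hxpos t ht.1
      have h3 := hKx t ht.1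
      show x t ^ 2 ≤ K * x t
      nlinarith
    rw [intervalIntegral.integral_const_mul] at h1
    have h4 := hI b hb
    nlinarith [hK0]
  set B' := B + 1 with hB''
  clear_value B'
  have hB'pos : (0:ℝ) < B' := by rw [hB'']; linarith
  set C := K * M₁ - y s₂ with hC'
  clear_value C
  have hylow : ∀ s, s₂ ≤ s → -(C + B' * s) ≤ y s := by
    intro s hs
    have h1 := FTCy s₂ s
    have h2 : ∫ t in s₂..s, ((x t) ^ 2 + B) = (∫ t in s₂..s, (x t) ^ 2) + (s - s₂) * B := by
      rw [integral_add (hsqc'.intervalIntegrable _ _) intervalIntegrable_const,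
        integral_const, smul_eq_mul]
    have h3 := hIx2' s hs
    have hs0 : (0:ℝ) ≤ s := le_trans hs₂0 hs
    have h5 : 0 ≤ s₂ * B := mul_nonneg hs₂0 hB
    have h6 : B' * s = B * s + s := by rw [hB'']; ring
    have h7 : (s - s₂) * B = B * s - s₂ * B := by ring
    have h4 : (s - s₂) * B ≤ B' * s := by linarith
    rw [hC']
    linarith
  have hxs₂ := hxpos s₂ le_rfl
  set C₂ := max C 0 + A / x s₂ with hC₂'
  clear_value C₂
  have hC₂C : C ≤ C₂ := by
    have h1 : 0 < A / x s₂ := div_pos hA hxs₂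
    have h2 := le_max_left C 0
    rw [hC₂']; linarith
  have hC₂pos : 0 < C₂ := by
    have h1 : 0 < A / x s₂ := div_pos hA hxs₂
    have h2 := le_max_right C 0
    rw [hC₂']; linarith
  have hdenom : ∀ s, s₂ ≤ s → 0 < C₂ + B' * s := by
    intro s hs
    have h1 : 0 ≤ B' * s := mul_nonneg hB'pos.le (le_trans hs₂0 hs)
    linarith
  set m : ℝ → ℝ := fun s => A / (2 * (C₂ + B' * s)) with hm'
  set m' : ℝ → ℝ := fun s => A * (-(2 * B') / (2 * (C₂ + B' * s)) ^ 2) with hm''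
  clear_value m m'
  have hmd : ∀ s, s₂ ≤ s → HasDerivAt m (m' s) s := by
    intro s hs
    have hd : HasDerivAt (fun u => 2 * (C₂ + B' * u)) (2 * B') s := by
      simpa using (((hasDerivAt_id s).const_mul B').const_add C₂).const_mul 2
    have hne : 2 * (C₂ + B' * s) ≠ 0 := ne_of_gt (by have := hdenom s hs; linarith)
    have h1 := (hd.inv hne).const_mul A
    have h2 : m = fun u => A * (2 * (C₂ + B' * u))⁻¹ := by
      funext u; simp only [hm']; rw [div_eq_mul_inv]
    rw [h2, hm'']
    exact h1
  have hmpos : ∀ s, s₂ ≤ s → 0 < m s := by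
    intro s hs
    simp only [hm']
    exact div_pos hA (by have := hdenom s hs; linarith)
  have hm'neg : ∀ s, s₂ ≤ s → m' s ≤ 0 := by
    intro s hs
    simp only [hm'']
    apply mul_nonpos_iff.2
    left
    exact ⟨hA.le, div_nonpos_of_nonpos_of_nonneg (by linarith) (sq_nonneg _)⟩
  have hms₂ : m s₂ < x s₂ := by
    have h1 : A / x s₂ ≤ C₂ + B' * s₂ := by
      have h2 : 0 ≤ B' * s₂ := mul_nonneg hB'pos.le hs₂0
      have h3 := le_max_right C 0
      rw [hC₂']; linarith
    have h2 : 0 < A / x s₂ := div_pos hA hxs₂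
    have h3 : m s₂ ≤ A / (2 * (A / x s₂)) := by
      simp only [hm']
      gcongr
    have h4 : A / (2 * (A / x s₂)) = x s₂ / 2 := by
      rw [div_eq_iff (by positivity : 2 * (A / x s₂) ≠ 0)]
      field_simp
    linarith
  have hmx : ∀ s, s₂ ≤ s → 0 < x s - m s := by
    apply my_barrier (f := fun s => x s - m s) (f' := fun s => (x s * y s + A) - m' s)
      (fun s hs => (hx s).sub (hmd s hs)) (by show 0 < x s₂ - m s₂; linarith)
    intro s hs hfs
    have hxm : x s = m s := by
      have : x s - m s = 0 := hfs
      linarith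
    have hmp := hmpos s hs
    have h1 : -(C + B' * s) ≤ y s := hylow s hs
    have h2 : m s * (-(C₂ + B' * s)) ≤ m s * y s :=
      mul_le_mul_of_nonneg_left (by linarith) hmp.le
    have h3 : (C₂ + B' * s) * m s = A / 2 := by
      simp only [hm']
      rw [mul_div_assoc']
      rw [div_eq_div_iff (by have := hdenom s hs; linarith) (by norm_num : (2:ℝ) ≠ 0)]
      ring
    have h5 : m s * (-(C₂ + B' * s)) = -(A / 2) := by linear_combination -h3
    have h4 := hm'neg s hs
    have hxy : x s * y s = m s * y s := by rw [hxm]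
    show 0 < (x s * y s + A) - m' s
    rw [hxy]
    linarith
  -- integrability and FTC for m
  have hmcont : ∀ b, s₂ ≤ b → ContinuousOn m (Icc s₂ b) := by
    intro b hb
    simp only [hm']
    apply ContinuousOn.div continuousOn_const
    · exact (continuous_const.mul (continuous_const.add (continuous_const.mul continuous_id))).continuousOn
    · intro t ht
      have := hdenom t ht.1
      intro hzero
      nlinarith
  have hGder : ∀ s, s₂ ≤ s →
      HasDerivAt (fun u => A / (2 * B') * Real.log (C₂ + B' * u)) (m s) s := by
    intro s hs
    have h0 := hdenom s hs
    have hd : HasDerivAt (fun u => C₂ + B' * u) B' s := by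
      simpa using ((hasDerivAt_id s).const_mul B').const_add C₂
    have h1 := (Real.hasDerivAt_log (ne_of_gt h0)).comp s hd
    have h2 := h1.const_mul (A / (2 * B'))
    have h3 : (fun u => A / (2 * B') * (Real.log ∘ fun u => C₂ + B' * u) u)
        = fun u => A / (2 * B') * Real.log (C₂ + B' * u) := by
      funext u; simp [Function.comp]
    rw [h3] at h2
    refine h2.congr_deriv (Eq.symm ?_)
    simp only [hm']
    field_simp
  have hintm : ∀ b, s₂ ≤ b →
      A / (2 * B') * Real.log (C₂ + B' * b) - A / (2 * B') * Real.log (C₂ + B' * s₂) ≤ M₁ := by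
    intro b hb
    have h1 : ∫ t in s₂..b, m t
        = A / (2 * B') * Real.log (C₂ + B' * b) - A / (2 * B') * Real.log (C₂ + B' * s₂) := by
      apply integral_eq_sub_of_hasDerivAt
      · intro t ht
        rw [uIcc_of_le hb] at ht
        exact hGder t ht.1
      · apply ContinuousOn.intervalIntegrable
        rw [uIcc_of_le hb]
        exact hmcont b hb
    have h2 : ∫ t in s₂..b, m t ≤ ∫ t in s₂..b, x t := by
      apply integral_mono_on hb
      · apply ContinuousOn.intervalIntegrable
        rw [uIcc_of_le hb]
        exact hmcont b hb
      · exact hxc.intervalIntegrable _ _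
      · intro t ht
        have := hmx t ht.1
        linarith
    have h3 := hI b hb
    linarith [h1 ▸ le_trans h2 h3]
  have htend : Tendsto (fun b => A / (2 * B') * Real.log (C₂ + B' * b)) atTop atTop := by
    apply Tendsto.const_mul_atTop (by positivity : (0:ℝ) < A / (2 * B'))
    apply Real.tendsto_log_atTop.comp
    apply tendsto_atTop_add_const_left
    exact Tendsto.const_mul_atTop hB'pos tendsto_id
  obtain ⟨b, hb1, hb2⟩ : ∃ b, s₂ ≤ b ∧
      M₁ + A / (2 * B') * Real.log (C₂ + B' * s₂) < A / (2 * B') * Real.log (C₂ + B' * b) := by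
    have h1 := htend.eventually_gt_atTop (M₁ + A / (2 * B') * Real.log (C₂ + B' * s₂))
    obtain ⟨b, hb⟩ := (h1.and (eventually_ge_atTop s₂)).exists
    exact ⟨b, hb.2, hb.1⟩
  have h1 := hintm b hb1
  linarith

open Filter

/-- If `A > 0`, `B ≥ 0` and `(x, y)` solves `x' = xy + A`, `y' = -x² - B`
on `ℝ`, and `θ(s) = ∫₀^s x`, then `θ(s) → +∞` as `s → +∞` and `θ(s) → +∞` as
`s → -∞`; i.e. each arm has infinite total curvature. -/
theorem stmt_12 (A B : ℝ) (hA : 0 < A) (hB : 0 ≤ B) (x y : ℝ → ℝ)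
    (hx : ∀ s, HasDerivAt x (x s * y s + A) s)
    (hy : ∀ s, HasDerivAt y (-(x s) ^ 2 - B) s)
    (θ : ℝ → ℝ) (hθ : ∀ s, θ s = ∫ t in (0:ℝ)..s, x t) :
    Tendsto θ atTop atTop ∧ Tendsto θ atBot atTop := by
  have hθf : θ = fun s => ∫ t in (0:ℝ)..s, x t := funext hθ
  constructor
  · rw [hθf]
    exact my_main A B hA hB x y hx hy
  · -- time reversal
    set x' : ℝ → ℝ := fun s => -x (-s) with hx'
    set y' : ℝ → ℝ := fun s => -y (-s) with hy'
    have hx2 : ∀ s, HasDerivAt x' (x' s * y' s + A) s := by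
      intro s
      have h1 : HasDerivAt (fun s => x (-s)) (-(x (-s) * y (-s) + A)) s := by
        have := (hx (-s)).comp s (hasDerivAt_neg s)
        exact this.congr_deriv (by ring)
      have h2 := h1.neg
      have h3 : x' s * y' s + A = x (-s) * y (-s) + A := by
        rw [hx', hy']; ring
      rw [hx', h3]
      exact h2.congr_deriv (by ring)
    have hy2 : ∀ s, HasDerivAt y' (-(x' s) ^ 2 - B) s := by
      intro s
      have h1 : HasDerivAt (fun s => y (-s)) ((x (-s)) ^ 2 + B) s := by
        have := (hy (-s)).comp s (hasDerivAt_neg s)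
        exact this.congr_deriv (by ring)
      have h2 := h1.neg
      have h3 : -(x' s) ^ 2 - B = -((x (-s)) ^ 2 + B) := by
        rw [hx']; ring
      rw [hy', h3]
      exact h2
    have hmain := my_main A B hA hB x' y' hx2 hy2
    have hcomp : Tendsto (fun s => ∫ t in (0:ℝ)..(-s), x' t) atBot atTop :=
      hmain.comp tendsto_neg_atBot_atTop
    have heq : ∀ s : ℝ, (∫ t in (0:ℝ)..(-s), x' t) = θ s := by
      intro s
      rw [hθ s, hx']
      have h1 : (∫ t in (0:ℝ)..(-s), -x (-t)) = -∫ t in (0:ℝ)..(-s), x (-t) := by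
        rw [intervalIntegral.integral_neg]
      rw [h1, intervalIntegral.integral_comp_neg (a := (0:ℝ)) (b := -s) x]
      rw [neg_neg, neg_zero]
      rw [intervalIntegral.integral_symm]
      ring
    exact Tendsto.congr heq hcomp
end

section
/- Let A ≠ 0 and let (x, y) solve x'(s) = x(s)y(s) + A, y'(s) = -x(s)^2 on ℝ (i.e., the system with B = 0). Define θ(s) = ∫₀^s x(s') ds'. Then the function s ↦ x(s)² + y(s)² - 2A·θ(s) is constant. -/
/-- If `A ≠ 0` and `(x, y)` solves `x' = xy + A`, `y' = -x²` on `ℝ`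
(the system with `B = 0`), and `θ(s) = ∫₀^s x`, then `x² + y² - 2Aθ` is constant. -/
theorem stmt_13 (A : ℝ) (hA : A ≠ 0) (x y : ℝ → ℝ)
    (hx : ∀ s, HasDerivAt x (x s * y s + A) s)
    (hy : ∀ s, HasDerivAt y (-(x s) ^ 2) s)
    (θ : ℝ → ℝ) (hθ : ∀ s, θ s = ∫ t in (0:ℝ)..s, x t) :
    ∀ s t : ℝ, (x s) ^ 2 + (y s) ^ 2 - 2 * A * θ s =
      (x t) ^ 2 + (y t) ^ 2 - 2 * A * θ t := by
  have hxc : Continuous x := continuous_iff_continuousAt.2 fun s => (hx s).continuousAt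
  have hθ' : ∀ s, HasDerivAt θ (x s) s := by
    intro s
    have h := intervalIntegral.integral_hasDerivAt_right
      ((hxc.intervalIntegrable 0 s : IntervalIntegrable x MeasureTheory.volume 0 s))
      (hxc.stronglyMeasurableAtFilter MeasureTheory.volume (nhds s)) hxc.continuousAt
    exact h.congr_of_eventuallyEq (Filter.Eventually.of_forall fun u => hθ u)
  have key : ∀ s, HasDerivAt (fun s => (x s) ^ 2 + (y s) ^ 2 - 2 * A * θ s) 0 s := by
    intro s
    have h : HasDerivAt (fun s => (x s) ^ 2 + (y s) ^ 2 - 2 * A * θ s)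
      (((2:ℕ):ℝ) * x s ^ (2 - 1) * (x s * y s + A) + ((2:ℕ):ℝ) * y s ^ (2 - 1) * -x s ^ 2 - 2 * A * x s) s :=
      (((hx s).pow 2).add ((hy s).pow 2)).sub ((hθ' s).const_mul (2 * A))
    convert h using 1
    ring
  have hconst := is_const_of_deriv_eq_zero (f := fun s => (x s) ^ 2 + (y s) ^ 2 - 2 * A * θ s)
    (fun s => (key s).differentiableAt) (fun s => (key s).deriv)
  intro s t
  exact hconst s t
end

section
/- Let β > 0 and consider the system x'(s) = x(s)y(s) + 1, y'(s) = -x(s)^2 + β². There is no nonconstant periodic solution (x, y) : ℝ → ℝ² with x(s) > 0 for all s. -/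
/-- A monotone function with a positive period is constant. -/
lemma per_const' {f : ℝ → ℝ} {L : ℝ} (hL : 0 < L) (hm : Monotone f)
    (hp : ∀ s, f (s + L) = f s) : ∀ a b : ℝ, f a = f b := by
  have key : ∀ (n : ℕ) (a : ℝ), f (a + n * L) = f a := by
    intro n
    induction n with
    | zero => intro a; simp
    | succ k ih =>
      intro a
      have : a + (k + 1 : ℕ) * L = (a + L) + k * L := by push_cast; ring
      rw [this, ih (a + L), hp a]
  have main : ∀ a b : ℝ, a ≤ b → f a = f b := by
    intro a b hab
    obtain ⟨n, hn⟩ := exists_nat_ge ((b - a) / L)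
    have hb : b ≤ a + n * L := by
      have := (div_le_iff₀ hL).mp hn
      linarith
    have h1 : f a ≤ f b := hm hab
    have h2 : f b ≤ f (a + n * L) := hm hb
    rw [key n a] at h2
    linarith
  intro a b
  rcases le_total a b with h | h
  · exact main a b h
  · exact (main b a h).symm

/-- For `β > 0`, the system `x' = xy + 1`, `y' = -x² + β²` has no
nonconstant periodic solution with `x > 0` everywhere: any periodic solution staying
in the right half-plane is constant. -/
theorem stmt_14 (β : ℝ) (hβ : 0 < β) (x y : ℝ → ℝ)
    (hx : ∀ s, HasDerivAt x (x s * y s + 1) s)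
    (hy : ∀ s, HasDerivAt y (-(x s) ^ 2 + β ^ 2) s)
    (hpos : ∀ s, 0 < x s)
    (L : ℝ) (hL : 0 < L)
    (hper : ∀ s, x (s + L) = x s ∧ y (s + L) = y s) :
    ∀ s t : ℝ, x s = x t ∧ y s = y t := by
  have hxne : ∀ s, x s ≠ 0 := fun s => (hpos s).ne'
  set g : ℝ → ℝ := fun s => y s + (x s)⁻¹ with hgdef
  have hg : ∀ s, HasDerivAt g ((-(x s) ^ 2 + β ^ 2) + (-(x s * y s + 1) / x s ^ 2)) s := by
    intro s
    exact (hy s).add ((hx s).inv (hxne s))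
  set Ψ : ℝ → ℝ := fun s => β ^ 2 * Real.log (x s) - (x s) ^ 2 / 2 - (g s) ^ 2 / 2 with hΨdef
  have hΨ : ∀ s, HasDerivAt Ψ ((g s) ^ 2 / x s) s := by
    intro s
    have h1 : HasDerivAt (fun t => β ^ 2 * Real.log (x t))
        (β ^ 2 * ((x s * y s + 1) / x s)) s :=
      ((hx s).log (hxne s)).const_mul (β ^ 2)
    have h2 : HasDerivAt (fun t => (x t) ^ 2 / 2)
        ((2 * x s ^ 1 * (x s * y s + 1)) / 2) s :=
      ((hx s).pow 2).div_const 2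
    have h3 : HasDerivAt (fun t => (g t) ^ 2 / 2)
        ((2 * g s ^ 1 * ((-(x s) ^ 2 + β ^ 2) + (-(x s * y s + 1) / x s ^ 2))) / 2) s :=
      ((hg s).pow 2).div_const 2
    have h := (h1.sub h2).sub h3
    have heq : β ^ 2 * ((x s * y s + 1) / x s) - (2 * x s ^ 1 * (x s * y s + 1)) / 2
        - (2 * g s ^ 1 * ((-(x s) ^ 2 + β ^ 2) + (-(x s * y s + 1) / x s ^ 2))) / 2
        = (g s) ^ 2 / x s := by
      have hxs := hxne s
      simp only [hgdef]
      field_simp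
      ring
    rw [heq] at h
    exact h
  -- Ψ is monotone
  have hmono : Monotone Ψ := by
    apply monotone_of_deriv_nonneg
    · exact fun s => (hΨ s).differentiableAt
    · intro s
      rw [(hΨ s).deriv]
      have := hpos s
      positivity
  -- Ψ is periodic
  have hΨper : ∀ s, Ψ (s + L) = Ψ s := by
    intro s
    simp only [hΨdef, hgdef, (hper s).1, (hper s).2]
  -- hence Ψ is constant
  have hΨconst : ∀ a b : ℝ, Ψ a = Ψ b := per_const' hL hmono hΨper
  -- so its derivative vanishes, i.e. g ≡ 0
  have hg0 : ∀ s, g s = 0 := by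
    intro s
    have hc : Ψ = fun _ => Ψ 0 := funext fun t => hΨconst t 0
    have : HasDerivAt Ψ 0 s := by rw [hc]; exact hasDerivAt_const s (Ψ 0)
    have h0 : (g s) ^ 2 / x s = 0 := (hΨ s).unique this
    have : (g s) ^ 2 = 0 := by
      rcases div_eq_zero_iff.mp h0 with h | h
      · exact h
      · exact absurd h (hxne s)
    exact pow_eq_zero_iff (n := 2) (by norm_num) |>.mp this
  -- x' = x * g = 0
  have hx0 : ∀ s, HasDerivAt x 0 s := by
    intro s
    have h : x s * y s + 1 = 0 := by
      have := hg0 s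
      simp only [hgdef] at this
      have hxs := hxne s
      field_simp at this
      nlinarith [this]
    rw [← h]; exact hx s
  have hxconst : ∀ s t : ℝ, x s = x t := by
    intro s t
    exact is_const_of_deriv_eq_zero (fun u => (hx0 u).differentiableAt)
      (fun u => (hx0 u).deriv) s t
  intro s t
  refine ⟨hxconst s t, ?_⟩
  have hys : y s = -(x s)⁻¹ := by
    have := hg0 s; simp only [hgdef] at this; linarith
  have hyt : y t = -(x t)⁻¹ := by
    have := hg0 t; simp only [hgdef] at this; linarith
  rw [hys, hyt, hxconst s t]
end
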